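/- arXiv:0904.1551 — 9 statements merged into one kernel-verified Lean document; each statement's English description precedes it below -/
import Mathlib

section
/- Let H be a finite nonempty set, let W_a > 0 and V_a > 0 be real numbers for each a ∈ H, and set W = Σ_{a∈H} W_a and V = Σ_{a∈H} V_a. Then for any vectors x_a ∈ ℝ^m (a ∈ H), |W^{-1} Σ_{a∈H} W_a x_a − V^{-1} Σ_{a∈H} V_a x_a| ≤ (max_{a,b∈H} |x_a − x_b|) · (1 − (min_{a∈H} V_a/W_a)/(max_{a∈H} V_a/W_a)). -/
/-- Let `H` be a finite nonempty set, `W a > 0`, `V a > 0` reals for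
`a ∈ H`, `W = ∑ W a`, `V = ∑ V a`.  Then for any vectors `x a ∈ ℝ^m`,
`‖W⁻¹ ∑ W a • x a − V⁻¹ ∑ V a • x a‖ ≤ (max_{a,b} ‖x a − x b‖) ·
  (1 − (min_a V a / W a) / (max_a V a / W a))`. -/
theorem stmt0 {H : Type*} [Fintype H] [Nonempty H] (m : ℕ)
    (W V : H → ℝ) (hW : ∀ a, 0 < W a) (hV : ∀ a, 0 < V a)
    (x : H → EuclideanSpace ℝ (Fin m)) :
    ‖(∑ a, W a)⁻¹ • ∑ a, W a • x a - (∑ a, V a)⁻¹ • ∑ a, V a • x a‖ ≤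
      (Finset.univ.sup' Finset.univ_nonempty fun p : H × H => ‖x p.1 - x p.2‖) *
        (1 - (Finset.univ.inf' Finset.univ_nonempty fun a => V a / W a) /
          (Finset.univ.sup' Finset.univ_nonempty fun a => V a / W a)) := by
  classical
  have hne : (Finset.univ : Finset H).Nonempty := Finset.univ_nonempty
  set D : ℝ := Finset.univ.sup' Finset.univ_nonempty fun p : H × H => ‖x p.1 - x p.2‖
    with hDdef
  set m' : ℝ := Finset.univ.inf' Finset.univ_nonempty fun a => V a / W a with hm'def
  set M' : ℝ := Finset.univ.sup' Finset.univ_nonempty fun a => V a / W a with hM'def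
  set SW : ℝ := ∑ a, W a with hSWdef
  set SV : ℝ := ∑ a, V a with hSVdef
  have hSWpos : 0 < SW := Finset.sum_pos (fun a _ => hW a) hne
  have hSVpos : 0 < SV := Finset.sum_pos (fun a _ => hV a) hne
  have hm'pos : 0 < m' := by
    rw [hm'def]
    exact (Finset.lt_inf'_iff _).mpr fun a _ => div_pos (hV a) (hW a)
  have hM'le : ∀ a : H, V a / W a ≤ M' := fun a =>
    Finset.le_sup' (fun a => V a / W a) (Finset.mem_univ a)
  have hm'le : ∀ a : H, m' ≤ V a / W a := fun a =>
    Finset.inf'_le (fun a => V a / W a) (Finset.mem_univ a)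
  obtain ⟨a0⟩ := ‹Nonempty H›
  have hM'pos : 0 < M' := lt_of_lt_of_le (div_pos (hV a0) (hW a0)) (hM'le a0)
  have hD0 : 0 ≤ D := le_trans (norm_nonneg (x a0 - x a0))
    (Finset.le_sup' (fun p : H × H => ‖x p.1 - x p.2‖) (Finset.mem_univ (a0, a0)))
  have hDle : ∀ a b : H, ‖x a - x b‖ ≤ D := fun a b =>
    Finset.le_sup' (fun p : H × H => ‖x p.1 - x p.2‖) (Finset.mem_univ (a, b))
  set c : ℝ := 1 - m' / M' with hcdef
  have hc0 : 0 ≤ c := by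
    have h1 : m' / M' ≤ 1 := (div_le_one hM'pos).mpr (le_trans (hm'le a0) (hM'le a0))
    rw [hcdef]; linarith
  set f : H → ℝ := fun a => W a / SW - V a / SV with hfdef
  have hL : SW⁻¹ • (∑ a, W a • x a) - SV⁻¹ • (∑ a, V a • x a) = ∑ a, f a • x a := by
    rw [Finset.smul_sum, Finset.smul_sum, ← Finset.sum_sub_distrib]
    refine Finset.sum_congr rfl fun a _ => ?_
    rw [smul_smul, smul_smul, ← sub_smul]
    congr 1
    simp only [hfdef, inv_mul_eq_div]
  have hfsum : ∑ a, f a = 0 := by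
    simp only [hfdef]
    rw [Finset.sum_sub_distrib, ← Finset.sum_div, ← Finset.sum_div, ← hSWdef, ← hSVdef,
      div_self hSWpos.ne', div_self hSVpos.ne', sub_self]
  set g : H → ℝ := fun a => max (f a) 0 with hgdef
  set hh : H → ℝ := fun a => max (-f a) 0 with hhdef
  have hgh : ∀ a, g a - hh a = f a := by
    intro a
    simp only [hgdef, hhdef]
    rcases le_total 0 (f a) with h | h
    · rw [max_eq_left h, max_eq_right (neg_nonpos.mpr h), sub_zero]
    · rw [max_eq_right h, max_eq_left (neg_nonneg.mpr h), zero_sub, neg_neg]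
  have hg0 : ∀ a, 0 ≤ g a := fun a => le_max_right _ _
  have hh0 : ∀ a, 0 ≤ hh a := fun a => le_max_right _ _
  set P : ℝ := ∑ a, g a with hPdef
  have hP0 : 0 ≤ P := Finset.sum_nonneg fun a _ => hg0 a
  have hPh : ∑ a, hh a = P := by
    have h1 : ∑ a, (g a - hh a) = 0 := by
      rw [Finset.sum_congr rfl fun a _ => hgh a]; exact hfsum
    rw [Finset.sum_sub_distrib] at h1
    rw [hPdef]; linarith
  have hfb : ∀ a, f a ≤ (W a / SW) * c := by
    intro a
    have h1 : m' * W a ≤ V a := by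
      have h := hm'le a
      rw [le_div_iff₀ (hW a)] at h
      exact h
    have h2 : SV ≤ M' * SW := by
      rw [hSVdef, hSWdef, Finset.mul_sum]
      refine Finset.sum_le_sum fun b _ => ?_
      have h := hM'le b
      rw [div_le_iff₀ (hW b)] at h
      exact h
    have h3 : m' * W a / (M' * SW) ≤ V a / SV :=
      div_le_div₀ (le_of_lt (hV a)) h1 hSVpos h2
    have h4 : (W a / SW) * (m' / M') = m' * W a / (M' * SW) := by
      field_simp
    have h5 : (W a / SW) * c = W a / SW - (W a / SW) * (m' / M') := by
      rw [hcdef]; ring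
    simp only [hfdef]
    linarith
  have hgb : ∀ a, g a ≤ (W a / SW) * c := by
    intro a
    simp only [hgdef]
    exact max_le (hfb a) (mul_nonneg (div_nonneg (hW a).le hSWpos.le) hc0)
  have hPc : P ≤ c := by
    rw [hPdef]
    calc ∑ a, g a ≤ ∑ a, (W a / SW) * c := Finset.sum_le_sum fun a _ => hgb a
      _ = (∑ a, W a / SW) * c := by rw [Finset.sum_mul]
      _ = c := by rw [← Finset.sum_div, ← hSWdef, div_self hSWpos.ne', one_mul]
  rw [show (∑ a, W a)⁻¹ • ∑ a, W a • x a - (∑ a, V a)⁻¹ • ∑ a, V a • x a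
      = ∑ a, f a • x a from hL]
  rcases eq_or_lt_of_le hP0 with hP | hP
  · have hf0 : ∀ a, f a = 0 := by
      intro a
      have hga := (Finset.sum_eq_zero_iff_of_nonneg (fun a _ => hg0 a)).mp
        (by rw [← hPdef, ← hP]) a (Finset.mem_univ a)
      have hha := (Finset.sum_eq_zero_iff_of_nonneg (fun a _ => hh0 a)).mp
        (by rw [hPh, ← hP]) a (Finset.mem_univ a)
      rw [← hgh a, hga, hha, sub_zero]
    have hz : ∑ a, f a • x a = 0 := Finset.sum_eq_zero fun a _ => by rw [hf0 a, zero_smul]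
    rw [hz, norm_zero]
    exact mul_nonneg hD0 hc0
  · have key : P • (∑ a, f a • x a) = ∑ a, ∑ b, (g a * hh b) • (x a - x b) := by
      have e1 : ∀ a b : H, (g a * hh b) • (x a - x b)
          = (g a * hh b) • x a - (g a * hh b) • x b := fun a b => smul_sub _ _ _
      simp only [e1, Finset.sum_sub_distrib]
      have e2 : ∑ a, ∑ b, (g a * hh b) • x a = ∑ a, (g a * P) • x a := by
        refine Finset.sum_congr rfl fun a _ => ?_
        rw [← Finset.sum_smul, ← Finset.mul_sum, hPh]
      have e3 : ∑ a, ∑ b, (g a * hh b) • x b = ∑ b, (P * hh b) • x b := by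
        rw [Finset.sum_comm]
        refine Finset.sum_congr rfl fun b _ => ?_
        rw [← Finset.sum_smul, ← Finset.sum_mul, ← hPdef]
      rw [e2, e3, Finset.smul_sum, ← Finset.sum_sub_distrib]
      refine Finset.sum_congr rfl fun a _ => ?_
      rw [smul_smul, ← sub_smul, ← hgh a]
      congr 1
      ring
    have hnorm : P * ‖∑ a, f a • x a‖ ≤ P * (P * D) := by
      have h1 : ‖P • (∑ a, f a • x a)‖ = P * ‖∑ a, f a • x a‖ := by
        rw [norm_smul, Real.norm_eq_abs, abs_of_nonneg hP0]
      rw [← h1, key]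
      calc ‖∑ a, ∑ b, (g a * hh b) • (x a - x b)‖
          ≤ ∑ a, ‖∑ b, (g a * hh b) • (x a - x b)‖ := norm_sum_le _ _
        _ ≤ ∑ a, ∑ b, ‖(g a * hh b) • (x a - x b)‖ :=
            Finset.sum_le_sum fun a _ => norm_sum_le _ _
        _ ≤ ∑ a, ∑ b, (g a * hh b) * D := by
            refine Finset.sum_le_sum fun a _ => Finset.sum_le_sum fun b _ => ?_
            rw [norm_smul, Real.norm_eq_abs, abs_of_nonneg (mul_nonneg (hg0 a) (hh0 b))]
            exact mul_le_mul_of_nonneg_left (hDle a b) (mul_nonneg (hg0 a) (hh0 b))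
        _ = P * (P * D) := by
            have e4 : ∀ a : H, ∑ b, (g a * hh b) * D = g a * (P * D) := by
              intro a
              rw [← Finset.sum_mul, ← Finset.mul_sum, hPh, mul_assoc]
            rw [Finset.sum_congr rfl fun a _ => e4 a, ← Finset.sum_mul, ← hPdef]
    have hnorm2 : ‖∑ a, f a • x a‖ ≤ P * D := le_of_mul_le_mul_left hnorm hP
    calc ‖∑ a, f a • x a‖ ≤ P * D := hnorm2
      _ ≤ c * D := mul_le_mul_of_nonneg_right hPc hD0
      _ = D * c := mul_comm _ _
end

section
/- Let A and B be finite nonempty sets and let W_a > 0, V_a > 0, x_a > 0 be real numbers for each a ∈ A ∪ B. Then |(Σ_{b∈B} W_b x_b)/(Σ_{a∈A} W_a x_a) − (Σ_{b∈B} V_b x_b)/(Σ_{a∈A} V_a x_a)| ≤ #B · ((max_{b∈B} x_b)/(min_{a∈A} x_a)) · max_{a∈A, b∈B} |W_b/W_a − V_b/V_a|, where #B denotes the cardinality of B. -/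
/-- Let `A` and `B` be finite nonempty sets and `W a, V a, x a > 0`
for `a ∈ A ∪ B`.  Then
`|(∑_{b∈B} W b x b)/(∑_{a∈A} W a x a) − (∑_{b∈B} V b x b)/(∑_{a∈A} V a x a)|
  ≤ #B · ((max_{b∈B} x b)/(min_{a∈A} x a)) · max_{a∈A,b∈B} |W b / W a − V b / V a|`. -/
theorem stmt1 {ι : Type*} [DecidableEq ι] (A B : Finset ι)
    (hA : A.Nonempty) (hB : B.Nonempty)
    (W V x : ι → ℝ)
    (hW : ∀ a ∈ A ∪ B, 0 < W a) (hV : ∀ a ∈ A ∪ B, 0 < V a)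
    (hx : ∀ a ∈ A ∪ B, 0 < x a) :
    |(∑ b ∈ B, W b * x b) / (∑ a ∈ A, W a * x a) -
        (∑ b ∈ B, V b * x b) / (∑ a ∈ A, V a * x a)| ≤
      (B.card : ℝ) * ((B.sup' hB x) / (A.inf' hA x)) *
        ((A ×ˢ B).sup' (hA.product hB) fun p => |W p.2 / W p.1 - V p.2 / V p.1|) := by
  have hAU : ∀ a ∈ A, a ∈ A ∪ B := fun a ha => Finset.mem_union_left _ ha
  have hBU : ∀ b ∈ B, b ∈ A ∪ B := fun b hb => Finset.mem_union_right _ hb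
  set SW := ∑ a ∈ A, W a * x a with hSW
  set SV := ∑ a ∈ A, V a * x a with hSV
  have hSWpos : 0 < SW :=
    Finset.sum_pos (fun a ha => mul_pos (hW a (hAU a ha)) (hx a (hAU a ha))) hA
  have hSVpos : 0 < SV :=
    Finset.sum_pos (fun a ha => mul_pos (hV a (hAU a ha)) (hx a (hAU a ha))) hA
  set m := A.inf' hA x with hm
  set X := B.sup' hB x with hX
  set M := (A ×ˢ B).sup' (hA.product hB) (fun p => |W p.2 / W p.1 - V p.2 / V p.1|) with hM
  have hmpos : 0 < m := by
    obtain ⟨a, ha, hae⟩ := A.exists_mem_eq_inf' hA x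
    rw [hm, hae]; exact hx a (hAU a ha)
  have hMnonneg : 0 ≤ M := by
    obtain ⟨p, hp, hpe⟩ := (A ×ˢ B).exists_mem_eq_sup' (hA.product hB)
      (fun p => |W p.2 / W p.1 - V p.2 / V p.1|)
    rw [hM, hpe]; exact abs_nonneg _
  have key : ∀ b ∈ B, |W b / SW - V b / SV| ≤ M / m := by
    intro b hb
    have h1 : W b / SW - V b / SV = (W b * SV - V b * SW) / (SW * SV) := by
      field_simp
    have h2 : W b * SV - V b * SW = ∑ a ∈ A, W a * V a * x a * (W b / W a - V b / V a) := by
      rw [hSW, hSV, Finset.mul_sum, Finset.mul_sum, ← Finset.sum_sub_distrib]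
      refine Finset.sum_congr rfl fun a ha => ?_
      have hWa := (hW a (hAU a ha)).ne'
      have hVa := (hV a (hAU a ha)).ne'
      field_simp
    have h3 : |W b * SV - V b * SW| ≤ M * ∑ a ∈ A, W a * V a * x a := by
      rw [h2, Finset.mul_sum]
      refine (Finset.abs_sum_le_sum_abs _ _).trans (Finset.sum_le_sum fun a ha => ?_)
      have hWp := hW a (hAU a ha)
      have hVp := hV a (hAU a ha)
      have hxp := hx a (hAU a ha)
      have hnn : (0:ℝ) ≤ W a * V a * x a := by positivity
      rw [abs_mul, abs_of_nonneg hnn, mul_comm M]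
      have hle : |W b / W a - V b / V a| ≤ M := by
        have := Finset.le_sup' (fun p : ι × ι => |W p.2 / W p.1 - V p.2 / V p.1|)
          (show (a, b) ∈ A ×ˢ B from Finset.mem_product.mpr ⟨ha, hb⟩)
        exact this
      exact mul_le_mul_of_nonneg_left hle hnn
    have h4 : m * ∑ a ∈ A, W a * V a * x a ≤ SW * SV := by
      calc m * ∑ a ∈ A, W a * V a * x a = ∑ a ∈ A, m * (W a * V a * x a) := by
            rw [Finset.mul_sum]
        _ ≤ ∑ a ∈ A, (W a * x a) * (V a * x a) := by
            refine Finset.sum_le_sum fun a ha => ?_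
            have hma : m ≤ x a := Finset.inf'_le x ha
            nlinarith [mul_nonneg (mul_nonneg (mul_pos (hW a (hAU a ha))
              (hV a (hAU a ha))).le (hx a (hAU a ha)).le) (sub_nonneg.mpr hma)]
        _ ≤ ∑ a ∈ A, (W a * x a) * SV := by
            refine Finset.sum_le_sum fun a ha => ?_
            have hWx : 0 ≤ W a * x a :=
              (mul_pos (hW a (hAU a ha)) (hx a (hAU a ha))).le
            refine mul_le_mul_of_nonneg_left ?_ hWx
            exact Finset.single_le_sum
              (fun i hi => (mul_pos (hV i (hAU i hi)) (hx i (hAU i hi))).le) ha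
        _ = SW * SV := by rw [← Finset.sum_mul]
    rw [h1, abs_div, abs_of_pos (mul_pos hSWpos hSVpos),
      div_le_div_iff₀ (mul_pos hSWpos hSVpos) hmpos]
    nlinarith [mul_le_mul_of_nonneg_right h3 hmpos.le,
      mul_le_mul_of_nonneg_left h4 hMnonneg]
  calc |(∑ b ∈ B, W b * x b) / SW - (∑ b ∈ B, V b * x b) / SV|
      = |∑ b ∈ B, (x b * (W b / SW - V b / SV))| := by
        rw [Finset.sum_div, Finset.sum_div, ← Finset.sum_sub_distrib]
        congr 1
        refine Finset.sum_congr rfl fun b hb => ?_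
        ring
    _ ≤ ∑ b ∈ B, |x b * (W b / SW - V b / SV)| := Finset.abs_sum_le_sum_abs _ _
    _ ≤ ∑ b ∈ B, X * (M / m) := by
        refine Finset.sum_le_sum fun b hb => ?_
        rw [abs_mul, abs_of_pos (hx b (hBU b hb))]
        have hxb : x b ≤ X := Finset.le_sup' x hb
        have hxbnn : 0 ≤ x b := (hx b (hBU b hb)).le
        have habs : |W b / SW - V b / SV| ≤ M / m := key b hb
        have hMm : 0 ≤ M / m := div_nonneg hMnonneg hmpos.le
        exact mul_le_mul hxb habs (abs_nonneg _) (le_trans hxbnn hxb)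
    _ = (B.card : ℝ) * (X * (M / m)) := by
        rw [Finset.sum_const, nsmul_eq_mul]
    _ = (B.card : ℝ) * (X / m) * M := by ring
end

section
/- Let H be a finite nonempty linearly ordered set, and for each a ∈ H let W_a : ℝ^p → [0,∞) and g_a : ℝ^p → ℝ be differentiable, with W := Σ_{a∈H} W_a > 0 everywhere. Define ḡ = W^{-1} Σ_{a∈H} W_a g_a. Then for every coordinate direction k ∈ {1,…,p}, ∂_k ḡ = W^{-1} Σ_{a∈H} W_a ∂_k g_a + W^{-2} Σ_{a<b in H} (∂_k W_a · W_b − W_a · ∂_k W_b)(g_a − g_b). -/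
lemma sum_pairs {H : Type*} [Fintype H] [LinearOrder H] (F : H → H → ℝ)
    (hdiag : ∀ a, F a a = 0) :
    ∑ a, ∑ b, F a b =
      ∑ q ∈ Finset.univ.filter (fun q : H × H => q.1 < q.2), (F q.1 q.2 + F q.2 q.1) := by
  classical
  rw [← Finset.sum_product' (s := Finset.univ) (t := Finset.univ),
    Finset.univ_product_univ,
    ← Finset.sum_filter_add_sum_filter_not Finset.univ (fun q : H × H => q.1 < q.2),
    ← Finset.sum_filter_add_sum_filter_not
      (Finset.univ.filter (fun q : H × H => ¬ q.1 < q.2)) (fun q : H × H => q.2 < q.1),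
    Finset.filter_filter, Finset.filter_filter]
  have e1 : Finset.univ.filter (fun q : H × H => ¬ q.1 < q.2 ∧ q.2 < q.1)
      = Finset.univ.filter (fun q : H × H => q.2 < q.1) := by
    apply Finset.filter_congr
    intro q _
    simp only [eq_iff_iff, and_iff_right_iff_imp]
    exact fun h => not_lt.2 h.le
  have e2 : ∑ q ∈ Finset.univ.filter (fun q : H × H => ¬ q.1 < q.2 ∧ ¬ q.2 < q.1),
      F q.1 q.2 = 0 := by
    apply Finset.sum_eq_zero
    intro q hq
    simp only [Finset.mem_filter, not_lt] at hq
    have : q.1 = q.2 := le_antisymm hq.2.2 hq.2.1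
    rw [this]; exact hdiag q.2
  have e3 : ∑ q ∈ Finset.univ.filter (fun q : H × H => q.2 < q.1), F q.1 q.2
      = ∑ q ∈ Finset.univ.filter (fun q : H × H => q.1 < q.2), F q.2 q.1 := by
    apply Finset.sum_nbij' (i := Prod.swap) (j := Prod.swap) <;>
      simp [Finset.mem_filter]
  rw [e1, e2, e3, Finset.sum_add_distrib]
  ring

/-- Let `H` be a finite nonempty linearly ordered set, and for each
`a ∈ H` let `W a : ℝ^p → [0,∞)` and `g a : ℝ^p → ℝ` be differentiable, with
`W = ∑_a W a > 0` everywhere.  Define `ḡ = W⁻¹ ∑_a W a · g a`.  Then for every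
coordinate direction `k`,
`∂ₖ ḡ = W⁻¹ ∑_a W a ∂ₖ g a + W⁻² ∑_{a<b} (∂ₖ W a · W b − W a · ∂ₖ W b)(g a − g b)`. -/
theorem stmt2 {H : Type*} [Fintype H] [Nonempty H] [LinearOrder H] (p : ℕ)
    (W g : H → (Fin p → ℝ) → ℝ)
    (hW0 : ∀ a x, 0 ≤ W a x)
    (hWd : ∀ a, Differentiable ℝ (W a)) (hgd : ∀ a, Differentiable ℝ (g a))
    (hWpos : ∀ x, 0 < ∑ a, W a x) (k : Fin p) (x : Fin p → ℝ) :
    fderiv ℝ (fun y => (∑ a, W a y)⁻¹ * ∑ a, W a y * g a y) x (Pi.single k 1) =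
      (∑ a, W a x)⁻¹ * (∑ a, W a x * fderiv ℝ (g a) x (Pi.single k 1)) +
        ((∑ a, W a x) ^ 2)⁻¹ *
          ∑ q ∈ Finset.univ.filter (fun q : H × H => q.1 < q.2),
            (fderiv ℝ (W q.1) x (Pi.single k 1) * W q.2 x -
                W q.1 x * fderiv ℝ (W q.2) x (Pi.single k 1)) * (g q.1 x - g q.2 x) := by
  have hs : (∑ a, W a x) ≠ 0 := (hWpos x).ne'
  have hS : HasFDerivAt (fun y => ∑ a, W a y) (∑ a, fderiv ℝ (W a) x) x :=
    HasFDerivAt.fun_sum fun a _ => (hWd a x).hasFDerivAt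
  have hInv : HasFDerivAt (fun y => (∑ a, W a y)⁻¹)
      ((-((∑ a, W a x) ^ 2)⁻¹) • (∑ a, fderiv ℝ (W a) x)) x :=
    (hasDerivAt_inv hs).comp_hasFDerivAt x hS
  have hN : HasFDerivAt (fun y => ∑ a, W a y * g a y)
      (∑ a, (W a x • fderiv ℝ (g a) x + g a x • fderiv ℝ (W a) x)) x :=
    HasFDerivAt.fun_sum fun a _ => ((hWd a x).hasFDerivAt.mul (hgd a x).hasFDerivAt)
  have hTot := hInv.fun_mul hN
  rw [hTot.fderiv]
  have key : ∑ q ∈ Finset.univ.filter (fun q : H × H => q.1 < q.2),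
      ((fderiv ℝ (W q.1) x (Pi.single k 1) * W q.2 x -
          W q.1 x * fderiv ℝ (W q.2) x (Pi.single k 1)) * (g q.1 x - g q.2 x))
      = (∑ a, g a x * fderiv ℝ (W a) x (Pi.single k 1)) * (∑ a, W a x)
        - (∑ a, fderiv ℝ (W a) x (Pi.single k 1)) * (∑ a, W a x * g a x) := by
    have e : ∑ q ∈ Finset.univ.filter (fun q : H × H => q.1 < q.2),
        ((fderiv ℝ (W q.1) x (Pi.single k 1) * W q.2 x -
            W q.1 x * fderiv ℝ (W q.2) x (Pi.single k 1)) * (g q.1 x - g q.2 x))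
        = ∑ q ∈ Finset.univ.filter (fun q : H × H => q.1 < q.2),
          ((fun a b => fderiv ℝ (W a) x (Pi.single k 1) * W b x * (g a x - g b x)) q.1 q.2 +
           (fun a b => fderiv ℝ (W a) x (Pi.single k 1) * W b x * (g a x - g b x)) q.2 q.1) :=
      Finset.sum_congr rfl fun q _ => by ring
    have hsp := sum_pairs
      (fun a b => fderiv ℝ (W a) x (Pi.single k 1) * W b x * (g a x - g b x))
      (fun a => by ring)
    rw [e, ← hsp]
    beta_reduce
    have e4 : ∀ a : H, ∑ b, fderiv ℝ (W a) x (Pi.single k 1) * W b x * (g a x - g b x)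
        = g a x * fderiv ℝ (W a) x (Pi.single k 1) * (∑ b, W b x)
          - fderiv ℝ (W a) x (Pi.single k 1) * (∑ b, W b x * g b x) := by
      intro a
      rw [Finset.mul_sum, Finset.mul_sum, ← Finset.sum_sub_distrib]
      exact Finset.sum_congr rfl fun b _ => by ring
    rw [Finset.sum_congr rfl fun a _ => e4 a, Finset.sum_sub_distrib,
      ← Finset.sum_mul, ← Finset.sum_mul]
  simp only [ContinuousLinearMap.add_apply, ContinuousLinearMap.smul_apply,
    ContinuousLinearMap.sum_apply, smul_eq_mul, Finset.sum_add_distrib,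
    Finset.mul_sum, neg_mul, mul_neg]
  simp only [← Finset.mul_sum, Finset.sum_neg_distrib]
  rw [key]
  field_simp
  ring
end

section
/- Let H be a finite nonempty linearly ordered set, p ≥ 1, q ≥ 1, and let ν be a p-dimensional multi-index with 1 ≤ |ν| ≤ q. There exist real constants c_{k,ν}(a_1,…,a_k, i_1,…,i_k), indexed over k = 2,…,|ν|+1, tuples a_1,…,a_k ∈ H with a_1 < a_2, multi-indices j with 0 ≤ j < ν and i_1,…,i_k ≥ 0 with i_1+⋯+i_k = ν − j, depending only on these indices (not on the functions below), such that: for all q-times differentiable functions W_a : ℝ^p → [0,∞) and g_a : ℝ^p → ℝ (a ∈ H) with W := Σ_a W_a > 0 everywhere, the function ḡ = W^{-1} Σ_a W_a g_a satisfies ḡ^{(ν)} = W^{-1} Σ_a W_a g_a^{(ν)} + Σ_{k=2}^{|ν|+1} Σ_{0 ≤ j < ν} W^{-k} U_{k,ν,j}, where U_{k,ν,j} = Σ c_{k,ν}(a_1,…,a_k, i_1,…,i_k) · (∏_{s=1}^k W_{a_s}^{(i_s)}) · (g_{a_1}^{(j)} − g_{a_2}^{(j)}), the inner sum running over a_1,…,a_k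 ∈ H with a_1 < a_2 and i_1+⋯+i_k = ν − j. -/
set_option linter.unusedSectionVars false

/-- The partial derivative in the `k`-th coordinate direction of a function `ℝ^p → ℝ`. -/
noncomputable def pderiv (p : ℕ) (k : Fin p) (f : (Fin p → ℝ) → ℝ) : (Fin p → ℝ) → ℝ :=
  fun x => fderiv ℝ f x (Pi.single k 1)

/-- For a multi-index `ν : Fin p → ℕ`, `mderiv p ν f` is the partial derivative
`∂^{|ν|} f / ∂x_1^{ν 1} ⋯ ∂x_p^{ν p}`, obtained by applying the `k`-th partial
derivative `ν k` times, for each coordinate `k`. -/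
noncomputable def mderiv (p : ℕ) (ν : Fin p → ℕ) (f : (Fin p → ℝ) → ℝ) :
    (Fin p → ℝ) → ℝ :=
  ((List.finRange p).foldr (fun k acc => (pderiv p k)^[ν k] ∘ acc) id) f

namespace Stmt3Aux

variable {p : ℕ}

private noncomputable def C (μ : Fin p → ℕ) (l : List (Fin p)) :
    ((Fin p → ℝ) → ℝ) → ((Fin p → ℝ) → ℝ) :=
  l.foldr (fun k acc => (pderiv p k)^[μ k] ∘ acc) id

lemma C_congr (μ μ' : Fin p → ℕ) (l : List (Fin p)) (h : ∀ k ∈ l, μ k = μ' k) :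
    C μ l = C μ' l := by
  induction l with
  | nil => rfl
  | cons a l ih =>
    simp only [C, List.foldr_cons] at *
    rw [h a (by simp), ih fun k hk => h k (List.mem_cons_of_mem _ hk)]

lemma C_zero (μ : Fin p → ℕ) (l : List (Fin p)) (h : ∀ k ∈ l, μ k = 0) :
    C μ l = id := by
  induction l with
  | nil => rfl
  | cons a l ih =>
    simp only [C, List.foldr_cons] at *
    rw [h a (by simp), ih fun k hk => h k (List.mem_cons_of_mem _ hk)]
    rfl

lemma C_peel (μ : Fin p → ℕ) (t : Fin p) (l : List (Fin p)) (hs : l.Pairwise (· < ·))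
    (h0 : ∀ k ∈ l, k < t → μ k = 0) (ht : t ∈ l) :
    C μ l = (pderiv p t)^[μ t] ∘ C (Function.update μ t 0) l := by
  induction l with
  | nil => cases ht
  | cons a l ih =>
    rcases List.mem_cons.1 ht with rfl | htl
    · have hgt : ∀ k ∈ l, t < k := (List.pairwise_cons.1 hs).1
      have : C μ l = C (Function.update μ t 0) l :=
        C_congr _ _ l fun k hk => (Function.update_of_ne (ne_of_gt (hgt k hk)) 0 μ).symm
      simp only [C, List.foldr_cons] at *
      rw [this, Function.update_self]
      rfl
    · have hat : a < t := by
        rcases lt_trichotomy a t with h | h | h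
        · exact h
        · exact absurd htl (h ▸ fun hm => (List.pairwise_cons.1 hs).1 _ hm |>.false)
        · exact absurd ((List.pairwise_cons.1 hs).1 t htl) (lt_asymm h)
      have ha0 : μ a = 0 := h0 a (by simp) hat
      have ha0' : Function.update μ t 0 a = 0 := by
        rw [Function.update_of_ne (ne_of_lt hat)]; exact ha0
      simp only [C, List.foldr_cons] at *
      rw [ha0, ha0',
        ih ((List.pairwise_cons.1 hs).2) (fun k hk h => h0 k (List.mem_cons_of_mem _ hk) h) htl]
      rfl

lemma mderiv_zero' (μ : Fin p → ℕ) (h : ∀ k, μ k = 0) (f : (Fin p → ℝ) → ℝ) :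
    mderiv p μ f = f := by
  show C μ (List.finRange p) f = f
  rw [C_zero μ _ fun k _ => h k]; rfl

lemma mderiv_zero (f : (Fin p → ℝ) → ℝ) : mderiv p (0 : Fin p → ℕ) f = f :=
  mderiv_zero' _ (fun _ => rfl) f

lemma pderiv_mderiv (i : Fin p → ℕ) (t : Fin p) (hlow : ∀ k, k < t → i k = 0)
    (f : (Fin p → ℝ) → ℝ) :
    mderiv p (i + Pi.single t 1) f = pderiv p t (mderiv p i f) := by
  have hup : Function.update (i + Pi.single t 1) t 0 = Function.update i t 0 := by
    funext k
    by_cases hk : k = t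
    · subst hk; simp
    · simp [Function.update_of_ne hk, Pi.single_eq_of_ne hk]
  have h1 : mderiv p (i + Pi.single t 1) f
      = (pderiv p t)^[i t + 1] (C (Function.update i t 0) (List.finRange p) f) := by
    show C (i + Pi.single t 1) (List.finRange p) f = _
    rw [C_peel _ t _ (List.pairwise_lt_finRange p)
      (fun k _ hk => by simp [hlow k hk, Pi.single_eq_of_ne (ne_of_lt hk)])
      (List.mem_finRange t), hup]
    simp
  have h2 : mderiv p i f = (pderiv p t)^[i t] (C (Function.update i t 0) (List.finRange p) f) := by
    show C i (List.finRange p) f = _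
    rw [C_peel i t _ (List.pairwise_lt_finRange p) (fun k _ hk => hlow k hk)
      (List.mem_finRange t)]
    rfl
  rw [h1, h2, Function.iterate_succ_apply']

lemma mderiv_single (t : Fin p) (f : (Fin p → ℝ) → ℝ) :
    mderiv p (Pi.single t 1) f = pderiv p t f := by
  have := pderiv_mderiv (0 : Fin p → ℕ) t (fun _ _ => rfl) f
  rwa [zero_add, mderiv_zero] at this

lemma contDiff_pderiv {f : (Fin p → ℝ) → ℝ} {m : ℕ} (t : Fin p)
    (hf : ContDiff ℝ ((m + 1 : ℕ)) f) : ContDiff ℝ (m : ℕ) (pderiv p t f) := by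
  have h1 : ContDiff ℝ (m : ℕ) (fderiv ℝ f) := hf.fderiv_right (by exact_mod_cast le_refl (m+1))
  exact h1.clm_apply contDiff_const

lemma exists_min_support (i : Fin p → ℕ) (h : ∃ k, i k ≠ 0) :
    ∃ t, i t ≠ 0 ∧ ∀ k, k < t → i k = 0 := by
  classical
  obtain ⟨k0, hk0⟩ := h
  set s : Finset (Fin p) := Finset.univ.filter (fun k => i k ≠ 0) with hs
  have hne : s.Nonempty := ⟨k0, by simp [hs, hk0]⟩
  refine ⟨s.min' hne, ?_, ?_⟩
  · have := s.min'_mem hne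
    simp only [hs, Finset.mem_filter] at this
    exact this.2
  · intro k hk
    by_contra hne0
    exact absurd (s.min'_le k (by simp [hs, hne0])) (not_le.2 hk)

/-- decompose a nonzero multi-index at its minimal support coordinate -/
lemma decompose (ν : Fin p → ℕ) (h : 1 ≤ ∑ k, ν k) :
    ∃ (t : Fin p) (ν' : Fin p → ℕ),
      (∀ k, k < t → ν' k = 0) ∧ ν = ν' + Pi.single t 1 ∧ (∑ k, ν' k) + 1 = ∑ k, ν k
      ∧ ν' ≤ ν := by
  classical
  have hne : ∃ k, ν k ≠ 0 := by
    by_contra hc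
    push_neg at hc
    simp [hc] at h
  obtain ⟨t, ht, hlow⟩ := exists_min_support ν hne
  refine ⟨t, Function.update ν t (ν t - 1), ?_, ?_, ?_, ?_⟩
  · intro k hk
    rw [Function.update_of_ne (ne_of_lt hk)]
    exact hlow k hk
  · funext k
    by_cases hk : k = t
    · subst hk
      simp only [Function.update_self, Pi.add_apply, Pi.single_eq_same]
      omega
    · simp [Function.update_of_ne hk, Pi.single_eq_of_ne hk]
  · rw [Finset.sum_update_of_mem (Finset.mem_univ t),
      ← Finset.sum_erase_add _ _ (Finset.mem_univ t), Finset.sdiff_singleton_eq_erase]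
    have := Nat.pos_of_ne_zero ht
    omega
  · intro k
    by_cases hk : k = t
    · subst hk; simp
    · simp [Function.update_of_ne hk]

lemma contDiff_mderiv {q : ℕ} :
    ∀ (n : ℕ) (i : Fin p → ℕ), ∑ k, i k = n → ∀ (m : ℕ), n + m ≤ q →
    ∀ {f : (Fin p → ℝ) → ℝ}, ContDiff ℝ (q : ℕ) f → ContDiff ℝ (m : ℕ) (mderiv p i f) := by
  intro n
  induction n with
  | zero =>
    intro i hi m hm f hf
    have : ∀ k, i k = 0 := by
      intro k
      exact Finset.sum_eq_zero_iff.1 hi k (Finset.mem_univ k)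
    rw [mderiv_zero' i this]
    exact hf.of_le (by simp at hm; exact_mod_cast hm)
  | succ n ih =>
    intro i hi m hm f hf
    obtain ⟨t, i', hlow, hdec, hsum, _⟩ := decompose i (by omega)
    have hsum' : ∑ k, i' k = n := by omega
    rw [hdec, pderiv_mderiv i' t hlow]
    exact contDiff_pderiv t (ih i' hsum' (m+1) (by omega) hf)

lemma differentiable_mderiv {q : ℕ} (i : Fin p → ℕ) (hm : ∑ k, i k + 1 ≤ q)
    {f : (Fin p → ℝ) → ℝ} (hf : ContDiff ℝ (q : ℕ) f) :
    Differentiable ℝ (mderiv p i f) := by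
  have := contDiff_mderiv (∑ k, i k) i rfl 1 hm hf
  exact this.differentiable (by simp)

section Calc

variable {f g : (Fin p → ℝ) → ℝ} {x : Fin p → ℝ} {t : Fin p}

lemma pderiv_add (hf : DifferentiableAt ℝ f x) (hg : DifferentiableAt ℝ g x) :
    pderiv p t (fun y => f y + g y) x = pderiv p t f x + pderiv p t g x := by
  simp only [pderiv, fderiv_fun_add hf hg, ContinuousLinearMap.add_apply]

lemma pderiv_sub (hf : DifferentiableAt ℝ f x) (hg : DifferentiableAt ℝ g x) :
    pderiv p t (fun y => f y - g y) x = pderiv p t f x - pderiv p t g x := by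
  simp only [pderiv, fderiv_fun_sub hf hg, ContinuousLinearMap.sub_apply]

lemma pderiv_sum {ι : Type*} (u : Finset ι) (A : ι → (Fin p → ℝ) → ℝ)
    (h : ∀ a ∈ u, DifferentiableAt ℝ (A a) x) :
    pderiv p t (fun y => ∑ a ∈ u, A a y) x = ∑ a ∈ u, pderiv p t (A a) x := by
  simp only [pderiv, fderiv_fun_sum h, ContinuousLinearMap.sum_apply]

lemma pderiv_mul (hf : DifferentiableAt ℝ f x) (hg : DifferentiableAt ℝ g x) :
    pderiv p t (fun y => f y * g y) x = pderiv p t f x * g x + f x * pderiv p t g x := by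
  simp only [pderiv, fderiv_fun_mul hf hg, ContinuousLinearMap.add_apply,
    ContinuousLinearMap.smul_apply, smul_eq_mul]
  ring

lemma pderiv_const_mul (c : ℝ) (hf : DifferentiableAt ℝ f x) :
    pderiv p t (fun y => c * f y) x = c * pderiv p t f x := by
  simp only [pderiv, fderiv_const_mul hf c, ContinuousLinearMap.smul_apply, smul_eq_mul]

lemma pderiv_prod {ι : Type*} [DecidableEq ι] (u : Finset ι) (A : ι → (Fin p → ℝ) → ℝ)
    (h : ∀ s ∈ u, DifferentiableAt ℝ (A s) x) :
    pderiv p t (fun y => ∏ s ∈ u, A s y) x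
      = ∑ s ∈ u, (∏ r ∈ u.erase s, A r x) * pderiv p t (A s) x := by
  have he : (fun y => ∏ s ∈ u, A s y) = (∏ s ∈ u, A s ·) := by
    funext y; rfl
  simp only [pderiv, he, fderiv_finset_prod h, ContinuousLinearMap.sum_apply,
    ContinuousLinearMap.smul_apply, smul_eq_mul]

lemma pderiv_inv (hf : DifferentiableAt ℝ f x) (hx : f x ≠ 0) :
    pderiv p t (fun y => (f y)⁻¹) x = -((f x) ^ 2)⁻¹ * pderiv p t f x := by
  have he : (fun y => (f y)⁻¹) = Inv.inv ∘ f := rfl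
  simp only [pderiv, he, fderiv_comp x (differentiableAt_inv hx) hf,
    ContinuousLinearMap.comp_apply, fderiv_inv, ContinuousLinearMap.smulRight_apply,
    ContinuousLinearMap.one_apply, ContinuousLinearMap.toSpanSingleton_apply, smul_eq_mul]
  ring

lemma pderiv_pow_succ (m : ℕ) (hf : DifferentiableAt ℝ f x) :
    pderiv p t (fun y => f y ^ (m + 1)) x = (m + 1 : ℝ) * f x ^ m * pderiv p t f x := by
  induction m with
  | zero => simp [pow_one]
  | succ m ih =>
    have he : (fun y => f y ^ (m + 2)) = fun y => f y ^ (m + 1) * f y := by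
      funext y; ring
    rw [he, pderiv_mul (hf.fun_pow (m+1)) hf, ih]
    push_cast
    ring

lemma pderiv_inv_pow (m : ℕ) (hf : DifferentiableAt ℝ f x) (hx : f x ≠ 0) :
    pderiv p t (fun y => (f y ^ (m + 1))⁻¹) x
      = -((m + 1 : ℝ)) * ((f x) ^ (m + 2))⁻¹ * pderiv p t f x := by
  rw [pderiv_inv (hf.fun_pow (m+1)) (pow_ne_zero _ hx), pderiv_pow_succ m hf]
  have h1 : (f x ^ (m + 1)) ^ 2 = f x ^ (m + 2) * f x ^ m := by ring
  rw [h1, mul_inv]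
  field_simp

end Calc

lemma antisym_sum {H : Type*} [Fintype H] [LinearOrder H] (A : H → H → ℝ)
    (hA : ∀ a b, A b a = -A a b) (h : H → ℝ) :
    ∑ a, ∑ b, A a b * h a
      = ∑ a, ∑ b ∈ Finset.univ.filter (fun b => a < b), A a b * (h a - h b) := by
  classical
  have hR : ∀ a b, A a b * h a + A b a * h b
      = (if a < b then A a b * (h a - h b) else 0)
        + (if b < a then A b a * (h b - h a) else 0) := by
    intro a b
    rcases lt_trichotomy a b with hab | rfl | hba
    · rw [if_pos hab, if_neg (lt_asymm hab), hA a b]; ring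
    · have h0 : A a a = 0 := by linarith [hA a a]
      simp [h0]
    · rw [if_neg (lt_asymm hba), if_pos hba, hA a b]; ring
  have h2 : (2:ℝ) * (∑ a, ∑ b, A a b * h a)
      = 2 * ∑ a, ∑ b, (if a < b then A a b * (h a - h b) else 0) := by
    have e1 : ∑ a, ∑ b, A a b * h a = ∑ a, ∑ b, A b a * h b := Finset.sum_comm
    have e2 : ∑ a : H, ∑ b : H, (if b < a then A b a * (h b - h a) else 0)
        = ∑ a : H, ∑ b : H, (if a < b then A a b * (h a - h b) else 0) := Finset.sum_comm
    calc (2:ℝ) * (∑ a, ∑ b, A a b * h a)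
        = (∑ a, ∑ b, A a b * h a) + (∑ a, ∑ b, A b a * h b) := by rw [← e1]; ring
      _ = ∑ a, ∑ b, (A a b * h a + A b a * h b) := by
          rw [← Finset.sum_add_distrib]
          exact Finset.sum_congr rfl fun a _ => (Finset.sum_add_distrib).symm
      _ = ∑ a, ∑ b, ((if a < b then A a b * (h a - h b) else 0)
            + (if b < a then A b a * (h b - h a) else 0)) :=
          Finset.sum_congr rfl fun a _ => Finset.sum_congr rfl fun b _ => hR a b
      _ = (∑ a, ∑ b, (if a < b then A a b * (h a - h b) else 0))
            + ∑ a, ∑ b, (if b < a then A b a * (h b - h a) else 0) := by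
          rw [← Finset.sum_add_distrib]
          exact Finset.sum_congr rfl fun a _ => Finset.sum_add_distrib
      _ = 2 * ∑ a, ∑ b, (if a < b then A a b * (h a - h b) else 0) := by rw [e2]; ring
  have h3 := mul_left_cancel₀ (two_ne_zero (α := ℝ)) h2
  rw [h3]
  exact Finset.sum_congr rfl fun a _ => (Finset.sum_filter _ _).symm

section Framework

variable (H : Type*) [Fintype H] [LinearOrder H]

structure Idx (p : ℕ) where
  k : ℕ
  a : Fin (k + 2) → H
  i : Fin (k + 2) → Fin p → ℕ
  j : Fin p → ℕ

variable (p q : ℕ)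

def Adm (Wg : (H → (Fin p → ℝ) → ℝ) × (H → (Fin p → ℝ) → ℝ)) : Prop :=
  (∀ a x, 0 ≤ Wg.1 a x) ∧ (∀ a, ContDiff ℝ (q : ℕ) (Wg.1 a)) ∧
    (∀ a, ContDiff ℝ (q : ℕ) (Wg.2 a)) ∧ ∀ x, 0 < ∑ a, Wg.1 a x

noncomputable def Tfun (d : Idx H p) (W g : H → (Fin p → ℝ) → ℝ) (x : Fin p → ℝ) : ℝ :=
  ((∑ b, W b x) ^ (d.k + 2))⁻¹ * (∏ s, mderiv p (d.i s) (W (d.a s)) x) *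
    (mderiv p d.j (g (d.a 0)) x - mderiv p d.j (g (d.a 1)) x)

noncomputable def T (d : Idx H p) : {Wg // Adm H p q Wg} → (Fin p → ℝ) → ℝ := fun Wg =>
  Tfun H p d Wg.1.1 Wg.1.2

def Con (ν : Fin p → ℕ) : Set (Idx H p) :=
  { d | d.k + 1 ≤ ∑ k, ν k ∧ d.a 0 < d.a 1 ∧ (∀ k, d.j k ≤ ν k) ∧ d.j ≠ ν ∧
      (∀ s k, d.i s k ≤ ν k) ∧ ∀ k, (∑ s, d.i s k) = ν k - d.j k }

end Framework

section Pointwise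

variable {H : Type*} [Fintype H] [LinearOrder H] {q : ℕ}
variable {W g : H → (Fin p → ℝ) → ℝ}

lemma diffAt_finprod {ι : Type*} (u : Finset ι) (A : ι → (Fin p → ℝ) → ℝ)
    {x : Fin p → ℝ} (h : ∀ s ∈ u, DifferentiableAt ℝ (A s) x) :
    DifferentiableAt ℝ (fun y => ∏ s ∈ u, A s y) x := by
  classical
  induction u using Finset.induction with
  | empty => simp only [Finset.prod_empty]; exact differentiableAt_const 1
  | @insert a u ha ih =>
    simp only [Finset.prod_insert ha]
    exact (h a (Finset.mem_insert_self a u)).mul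
      (ih fun s hs => h s (Finset.mem_insert_of_mem hs))

lemma Con.sum_i_le {ν : Fin p → ℕ} {d : Idx H p} (hd : d ∈ Con H p ν)
    (s : Fin (d.k + 2)) : ∑ k, d.i s k ≤ ∑ k, ν k := by
  calc ∑ k, d.i s k ≤ ∑ k, ∑ s', d.i s' k :=
        Finset.sum_le_sum fun k _ =>
          Finset.single_le_sum (f := fun s' => d.i s' k) (fun s' _ => Nat.zero_le _)
            (Finset.mem_univ s)
    _ = ∑ k, (ν k - d.j k) := Finset.sum_congr rfl fun k _ => hd.2.2.2.2.2 k
    _ ≤ ∑ k, ν k := Finset.sum_le_sum fun k _ => Nat.sub_le _ _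

lemma Con.sum_j_le {ν : Fin p → ℕ} {d : Idx H p} (hd : d ∈ Con H p ν) :
    ∑ k, d.j k ≤ ∑ k, ν k :=
  Finset.sum_le_sum fun k _ => hd.2.2.1 k

lemma diff_Tfun {H : Type*} [Fintype H] [LinearOrder H] {q : ℕ}
    {W g : H → (Fin p → ℝ) → ℝ}
    (hW : ∀ a, ContDiff ℝ (q : ℕ) (W a)) (hg : ∀ a, ContDiff ℝ (q : ℕ) (g a))
    (hpos : ∀ x, 0 < ∑ a, W a x) {ν' : Fin p → ℕ} (hν'q : ∑ k, ν' k + 1 ≤ q)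
    {d : Idx H p} (hd : d ∈ Con H p ν') :
    Differentiable ℝ (Tfun H p d W g) := by
  have hq1 : 1 ≤ q := by omega
  have hWd : ∀ a : H, Differentiable ℝ (W a) := fun a =>
    (hW a).differentiable (by exact_mod_cast Nat.one_le_iff_ne_zero.mp hq1)
  have hFd : Differentiable ℝ (fun y => ∑ a, W a y) :=
    Differentiable.fun_sum (fun a _ => hWd a)
  intro x
  have hFx : (∑ a, W a x) ≠ 0 := ne_of_gt (hpos x)
  have h1 : DifferentiableAt ℝ (fun y => ((∑ b, W b y) ^ (d.k + 2))⁻¹) x :=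
    ((hFd x).pow _).inv (pow_ne_zero _ hFx)
  have h2 : DifferentiableAt ℝ (fun y => ∏ s, mderiv p (d.i s) (W (d.a s)) y) x :=
    diffAt_finprod Finset.univ _ fun s _ =>
      (differentiable_mderiv (d.i s) (by have := Con.sum_i_le hd s; omega) (hW (d.a s))) x
  have h3 : DifferentiableAt ℝ
      (fun y => mderiv p d.j (g (d.a 0)) y - mderiv p d.j (g (d.a 1)) y) x := by
    have hj := Con.sum_j_le hd
    exact ((differentiable_mderiv d.j (by omega) (hg (d.a 0))) x).sub
      ((differentiable_mderiv d.j (by omega) (hg (d.a 1))) x)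
  exact ((h1.mul h2).mul h3 : DifferentiableAt ℝ _ x)

lemma D1 (hW : ∀ a, ContDiff ℝ (q : ℕ) (W a)) (hpos : ∀ x, 0 < ∑ a, W a x)
    (hq1 : 1 ≤ q) (t : Fin p) (x : Fin p → ℝ) (h : H → (Fin p → ℝ) → ℝ)
    (hh : ∀ a, DifferentiableAt ℝ (h a) x) :
    pderiv p t (fun y => (∑ a, W a y)⁻¹ * ∑ a, W a y * h a y) x
      = (∑ a, W a x)⁻¹ * ∑ a, W a x * pderiv p t (h a) x
        + ((∑ a, W a x) ^ 2)⁻¹ * ∑ a, ∑ b ∈ Finset.univ.filter (fun b => a < b),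
            (W b x * pderiv p t (W a) x - pderiv p t (W b) x * W a x)
              * (h a x - h b x) := by
  have hWd : ∀ (a : H) (y : Fin p → ℝ), DifferentiableAt ℝ (W a) y := fun a y =>
    ((hW a).differentiable (by exact_mod_cast Nat.one_le_iff_ne_zero.mp hq1)).differentiableAt
  have hFd : DifferentiableAt ℝ (fun y => ∑ a, W a y) x :=
    DifferentiableAt.fun_sum (fun a _ => hWd a x)
  have hFx : (∑ a, W a x) ≠ 0 := ne_of_gt (hpos x)
  have hGd : DifferentiableAt ℝ (fun y => ∑ a, W a y * h a y) x :=
    DifferentiableAt.fun_sum (fun a _ => (hWd a x).mul (hh a))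
  have hFinv : DifferentiableAt ℝ (fun y => (∑ a, W a y)⁻¹) x := hFd.inv hFx
  have key := antisym_sum
    (fun a b => W b x * pderiv p t (W a) x - pderiv p t (W b) x * W a x)
    (fun a b => by ring) (fun a => h a x)
  rw [pderiv_mul hFinv hGd, pderiv_inv hFd hFx,
    pderiv_sum Finset.univ _ (fun a _ => (hWd a x).fun_mul (hh a)),
    pderiv_sum Finset.univ _ (fun a _ => hWd a x),
    Finset.sum_congr rfl (fun a _ => pderiv_mul (hWd a x) (hh a)), ← key]
  have expand : ∑ a, ∑ b,
      (W b x * pderiv p t (W a) x - pderiv p t (W b) x * W a x) * h a x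
      = (∑ b, W b x) * (∑ a, pderiv p t (W a) x * h a x)
        - (∑ b, pderiv p t (W b) x) * (∑ a, W a x * h a x) := by
    have inner : ∀ a, ∑ b,
        (W b x * pderiv p t (W a) x - pderiv p t (W b) x * W a x) * h a x
        = (∑ b, W b x) * (pderiv p t (W a) x * h a x)
          - (∑ b, pderiv p t (W b) x) * (W a x * h a x) := fun a => by
      rw [Finset.sum_mul, Finset.sum_mul, ← Finset.sum_sub_distrib]
      exact Finset.sum_congr rfl fun b _ => by ring
    rw [Finset.sum_congr rfl fun a _ => inner a, Finset.sum_sub_distrib,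
      ← Finset.mul_sum, ← Finset.mul_sum]
  rw [expand, Finset.sum_add_distrib]
  field_simp
  ring

end Pointwise

section Step

variable {H : Type*} [Fintype H] [LinearOrder H]

lemma snoc_zero {α : Type*} {n : ℕ} (a : Fin (n + 2) → α) (b : α) :
    (Fin.snoc a b : Fin (n + 3) → α) 0 = a 0 := by
  rw [show (0 : Fin (n + 3)) = Fin.castSucc 0 by ext; simp, Fin.snoc_castSucc]

lemma snoc_one {α : Type*} {n : ℕ} (a : Fin (n + 2) → α) (b : α) :
    (Fin.snoc a b : Fin (n + 3) → α) 1 = a 1 := by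
  rw [show (1 : Fin (n + 3)) = Fin.castSucc 1 by ext; simp, Fin.snoc_castSucc]

variable {p : ℕ}

lemma sum_single (t : Fin p) : ∑ k, Pi.single t (1:ℕ) k = 1 := by
  classical
  simp [Pi.single_apply]

/-- the three index transformations occurring when differentiating a term -/
def dA (d : Idx H p) (t : Fin p) (b : H) : Idx H p :=
  ⟨d.k + 1, Fin.snoc d.a b, Fin.snoc d.i (Pi.single t 1), d.j⟩

def dB (d : Idx H p) (t : Fin p) (s : Fin (d.k + 2)) : Idx H p :=
  ⟨d.k, d.a, Function.update d.i s (d.i s + Pi.single t 1), d.j⟩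

def dC (d : Idx H p) (t : Fin p) : Idx H p :=
  ⟨d.k, d.a, d.i, d.j + Pi.single t 1⟩

variable {ν' ν : Fin p → ℕ} {t : Fin p} {d : Idx H p}

lemma sum_nu (hν : ν = ν' + Pi.single t 1) : ∑ k, ν k = ∑ k, ν' k + 1 := by
  subst hν
  simp only [Pi.add_apply]
  rw [Finset.sum_add_distrib, sum_single]

lemma nu'_le (hν : ν = ν' + Pi.single t 1) (k : Fin p) : ν' k ≤ ν k := by
  rw [hν]; simp [Pi.single_apply]

lemma nu_t (hν : ν = ν' + Pi.single t 1) : ν t = ν' t + 1 := by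
  rw [hν]; simp

lemma nu_ne (hν : ν = ν' + Pi.single t 1) (k : Fin p) (hk : k ≠ t) : ν k = ν' k := by
  rw [hν]; simp [Pi.single_apply, hk]

lemma mem_dA (hν : ν = ν' + Pi.single t 1) (hd : d ∈ Con H p ν') (b : H) :
    dA d t b ∈ Con H p ν := by
  obtain ⟨h1, h2, h3, h4, h5, h6⟩ := hd
  have hsν := sum_nu hν
  have hjs := Con.sum_j_le (ν := ν') (d := d) ⟨h1, h2, h3, h4, h5, h6⟩
  refine ⟨by simp only [dA]; omega, ?_, ?_, ?_, ?_, ?_⟩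
  · show (Fin.snoc d.a b : Fin (d.k + 3) → H) 0 < (Fin.snoc d.a b : Fin (d.k + 3) → H) 1
    rw [snoc_zero, snoc_one]; exact h2
  · intro k
    have := h3 k
    have := nu'_le hν k
    simp only [dA]
    omega
  · show d.j ≠ ν
    intro hc
    rw [hc] at hjs
    omega
  · show ∀ (s : Fin (d.k + 3)) (k : Fin p),
        (Fin.snoc d.i (Pi.single t 1) : Fin (d.k + 3) → Fin p → ℕ) s k ≤ ν k
    intro s k
    refine Fin.lastCases ?_ ?_ s
    · rw [Fin.snoc_last]
      by_cases hk : k = t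
      · subst hk
        rw [nu_t hν]
        simp
      · simp [Pi.single_apply, hk]
    · intro s'
      rw [Fin.snoc_castSucc]
      have := h5 s' k
      have := nu'_le hν k
      omega
  · intro k
    show ∑ s : Fin (d.k + 3), (Fin.snoc d.i (Pi.single t 1) : Fin (d.k + 3) → Fin p → ℕ) s k
        = ν k - d.j k
    rw [Fin.sum_univ_castSucc]
    simp only [Fin.snoc_castSucc, Fin.snoc_last]
    have h6k := h6 k
    have h3k := h3 k
    by_cases hk : k = t
    · subst hk
      have := nu_t hν
      simp only [Pi.single_eq_same]
      omega
    · have := nu_ne hν k hk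
      simp only [Pi.single_apply, hk, if_false]
      omega

lemma mem_dB (hν : ν = ν' + Pi.single t 1) (hd : d ∈ Con H p ν') (s : Fin (d.k + 2)) :
    dB d t s ∈ Con H p ν := by
  classical
  obtain ⟨h1, h2, h3, h4, h5, h6⟩ := hd
  have hsν := sum_nu hν
  have hjs := Con.sum_j_le (ν := ν') (d := d) ⟨h1, h2, h3, h4, h5, h6⟩
  refine ⟨by simp only [dB]; omega, h2, ?_, ?_, ?_, ?_⟩
  · intro k
    have := h3 k
    have := nu'_le hν k
    simp only [dB]
    omega
  · show d.j ≠ ν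
    intro hc
    rw [hc] at hjs
    omega
  · show ∀ (s' : Fin (d.k + 2)) (k : Fin p),
        Function.update d.i s (d.i s + Pi.single t 1) s' k ≤ ν k
    intro s' k
    by_cases hs : s' = s
    · subst hs
      rw [Function.update_self]
      have := h5 s' k
      by_cases hk : k = t
      · subst hk
        have := nu_t hν
        simp only [Pi.add_apply, Pi.single_eq_same]
        omega
      · have := nu_ne hν k hk
        simp only [Pi.add_apply, Pi.single_apply, hk, if_false]
        omega
    · rw [Function.update_of_ne hs]
      have := h5 s' k
      have := nu'_le hν k
      omega
  · intro k
    show ∑ s' : Fin (d.k + 2), Function.update d.i s (d.i s + Pi.single t 1) s' k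
        = ν k - d.j k
    have hsplit : ∑ s' : Fin (d.k + 2), Function.update d.i s (d.i s + Pi.single t 1) s' k
        = (d.i s k + (Pi.single t 1 : Fin p → ℕ) k) + ∑ s' ∈ Finset.univ.erase s, d.i s' k := by
      rw [show (fun s' => Function.update d.i s (d.i s + Pi.single t 1) s' k)
          = Function.update (fun s' => d.i s' k) s (d.i s k + (Pi.single t 1 : Fin p → ℕ) k) by
        funext s'
        by_cases hs : s' = s
        · subst hs; simp
        · simp [Function.update_of_ne hs]]
      rw [Finset.sum_update_of_mem (Finset.mem_univ s), Finset.sdiff_singleton_eq_erase]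
    rw [hsplit]
    have htot : d.i s k + ∑ s' ∈ Finset.univ.erase s, d.i s' k = ν' k - d.j k := by
      rw [← h6 k]
      exact Finset.add_sum_erase Finset.univ (fun x => d.i x k) (Finset.mem_univ s)
    have h3k := h3 k
    by_cases hk : k = t
    · subst hk
      have := nu_t hν
      simp only [Pi.single_eq_same]
      omega
    · have := nu_ne hν k hk
      simp only [Pi.single_apply, hk, if_false]
      omega

lemma mem_dC (hν : ν = ν' + Pi.single t 1) (hd : d ∈ Con H p ν') :
    dC d t ∈ Con H p ν := by
  obtain ⟨h1, h2, h3, h4, h5, h6⟩ := hd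
  have hsν := sum_nu hν
  refine ⟨by simp only [dC]; omega, h2, ?_, ?_, ?_, ?_⟩
  · intro k
    simp only [dC, Pi.add_apply]
    have := h3 k
    by_cases hk : k = t
    · subst hk
      have := nu_t hν
      simp only [Pi.single_eq_same]
      omega
    · have := nu_ne hν k hk
      simp only [Pi.single_apply, hk, if_false]
      omega
  · show d.j + Pi.single t 1 ≠ ν
    rw [hν]
    intro hc
    apply h4
    funext k
    have := congrFun hc k
    simp only [Pi.add_apply] at this
    omega
  · intro s k
    have := h5 s k
    have := nu'_le hν k
    simp only [dC]
    omega
  · intro k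
    have h6k := h6 k
    have h3k := h3 k
    simp only [dC, Pi.add_apply]
    change ∑ s : Fin (d.k + 2), d.i s k = _
    by_cases hk : k = t
    · subst hk
      have := nu_t hν
      simp only [Pi.single_eq_same]
      omega
    · have := nu_ne hν k hk
      simp only [Pi.single_apply, hk, if_false]
      omega

end Step

section DT

variable {H : Type*} [Fintype H] [LinearOrder H] {p q : ℕ}
variable {W g : H → (Fin p → ℝ) → ℝ}
variable {ν' ν : Fin p → ℕ} {t : Fin p} {d : Idx H p}

lemma pderiv_inv_pow2 {f : (Fin p → ℝ) → ℝ} {x : Fin p → ℝ} {t : Fin p} (m : ℕ)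
    (hf : DifferentiableAt ℝ f x) (hx : f x ≠ 0) :
    pderiv p t (fun y => (f y ^ (m + 2))⁻¹) x
      = -(m + 2 : ℝ) * ((f x) ^ (m + 3))⁻¹ * pderiv p t f x := by
  have h := pderiv_inv_pow (t := t) (m + 1) hf hx
  have e1 : (fun y => (f y ^ (m + 1 + 1))⁻¹) = fun y => (f y ^ (m + 2))⁻¹ := rfl
  rw [e1] at h
  rw [h]
  push_cast
  ring

lemma DT_pointwise
    (hW : ∀ a, ContDiff ℝ (q : ℕ) (W a)) (hg : ∀ a, ContDiff ℝ (q : ℕ) (g a))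
    (hpos : ∀ x, 0 < ∑ a, W a x)
    (hν : ν = ν' + Pi.single t 1) (hlow : ∀ k, k < t → ν' k = 0)
    (hνq : ∑ k, ν k ≤ q) (hd : d ∈ Con H p ν') (x : Fin p → ℝ) :
    pderiv p t (Tfun H p d W g) x
      = (∑ b, (-(d.k + 2 : ℝ)) * Tfun H p (dA d t b) W g x)
        + (∑ s, Tfun H p (dB d t s) W g x) + Tfun H p (dC d t) W g x := by
  classical
  obtain ⟨h1, h2, h3, h4, h5, h6⟩ := hd
  have hd' : d ∈ Con H p ν' := ⟨h1, h2, h3, h4, h5, h6⟩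
  have hsν := sum_nu hν
  have hν'q : ∑ k, ν' k + 1 ≤ q := by omega
  have hq1 : 1 ≤ q := by omega
  have hWd : ∀ (a : H) (y : Fin p → ℝ), DifferentiableAt ℝ (W a) y := fun a y =>
    ((hW a).differentiable (by exact_mod_cast Nat.one_le_iff_ne_zero.mp hq1)).differentiableAt
  have hFd : ∀ y, DifferentiableAt ℝ (fun z => ∑ b, W b z) y := fun y =>
    DifferentiableAt.fun_sum (fun a _ => hWd a y)
  have hFx : (∑ b, W b x) ≠ 0 := ne_of_gt (hpos x)
  have hilow : ∀ (s : Fin (d.k + 2)) (k : Fin p), k < t → d.i s k = 0 := fun s k hk =>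
    Nat.le_zero.mp (le_trans (h5 s k) (le_of_eq (hlow k hk)))
  have hjlow : ∀ (k : Fin p), k < t → d.j k = 0 := fun k hk =>
    Nat.le_zero.mp (le_trans (h3 k) (le_of_eq (hlow k hk)))
  have hPfac : ∀ (s : Fin (d.k + 2)) (y : Fin p → ℝ),
      DifferentiableAt ℝ (mderiv p (d.i s) (W (d.a s))) y := fun s y =>
    (differentiable_mderiv (d.i s) (by have := Con.sum_i_le hd' s; omega) (hW (d.a s))) y
  have hPd : ∀ y, DifferentiableAt ℝ
      (fun z => ∏ s, mderiv p (d.i s) (W (d.a s)) z) y := fun y =>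
    diffAt_finprod Finset.univ _ fun s _ => hPfac s y
  have hjd : ∀ (a : H) (y : Fin p → ℝ), DifferentiableAt ℝ (mderiv p d.j (g a)) y :=
    fun a y => (differentiable_mderiv d.j (by have := Con.sum_j_le hd'; omega) (hg a)) y
  have hDd : ∀ y, DifferentiableAt ℝ
      (fun z => mderiv p d.j (g (d.a 0)) z - mderiv p d.j (g (d.a 1)) z) y := fun y =>
    (hjd (d.a 0) y).sub (hjd (d.a 1) y)
  have hXd : DifferentiableAt ℝ (fun z => ((∑ b, W b z) ^ (d.k + 2))⁻¹) x :=
    ((hFd x).pow _).inv (pow_ne_zero _ hFx)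
  have hXPd : DifferentiableAt ℝ (fun z => ((∑ b, W b z) ^ (d.k + 2))⁻¹
      * ∏ s, mderiv p (d.i s) (W (d.a s)) z) x := hXd.mul (hPd x)
  -- derivative computations
  have c1 : pderiv p t (Tfun H p d W g) x
      = pderiv p t (fun z => ((∑ b, W b z) ^ (d.k + 2))⁻¹
            * ∏ s, mderiv p (d.i s) (W (d.a s)) z) x
          * (mderiv p d.j (g (d.a 0)) x - mderiv p d.j (g (d.a 1)) x)
        + (((∑ b, W b x) ^ (d.k + 2))⁻¹ * ∏ s, mderiv p (d.i s) (W (d.a s)) x)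
          * pderiv p t (fun z => mderiv p d.j (g (d.a 0)) z - mderiv p d.j (g (d.a 1)) z) x :=
    pderiv_mul hXPd (hDd x)
  have c2 : pderiv p t (fun z => ((∑ b, W b z) ^ (d.k + 2))⁻¹
        * ∏ s, mderiv p (d.i s) (W (d.a s)) z) x
      = pderiv p t (fun z => ((∑ b, W b z) ^ (d.k + 2))⁻¹) x
          * (∏ s, mderiv p (d.i s) (W (d.a s)) x)
        + ((∑ b, W b x) ^ (d.k + 2))⁻¹
          * pderiv p t (fun z => ∏ s, mderiv p (d.i s) (W (d.a s)) z) x :=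
    pderiv_mul hXd (hPd x)
  have c3 : pderiv p t (fun z => ((∑ b, W b z) ^ (d.k + 2))⁻¹) x
      = -(d.k + 2 : ℝ) * ((∑ b, W b x) ^ (d.k + 3))⁻¹
          * ∑ b, mderiv p (Pi.single t 1) (W b) x := by
    rw [pderiv_inv_pow2 d.k (hFd x) hFx,
      pderiv_sum Finset.univ _ (fun a _ => hWd a x)]
    congr 1
    exact Finset.sum_congr rfl fun b _ => (congrFun (mderiv_single t (W b)) x).symm
  have c5 : pderiv p t (fun z => ∏ s, mderiv p (d.i s) (W (d.a s)) z) x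
      = ∑ s, (∏ r ∈ Finset.univ.erase s, mderiv p (d.i r) (W (d.a r)) x)
          * mderiv p (d.i s + Pi.single t 1) (W (d.a s)) x := by
    rw [pderiv_prod Finset.univ _ (fun s _ => hPfac s x)]
    refine Finset.sum_congr rfl fun s _ => ?_
    congr 1
    exact (congrFun (pderiv_mderiv (d.i s) t (hilow s) (W (d.a s))) x).symm
  have c6 : pderiv p t (fun z => mderiv p d.j (g (d.a 0)) z - mderiv p d.j (g (d.a 1)) z) x
      = mderiv p (d.j + Pi.single t 1) (g (d.a 0)) x
        - mderiv p (d.j + Pi.single t 1) (g (d.a 1)) x := by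
    rw [pderiv_sub (hjd (d.a 0) x) (hjd (d.a 1) x)]
    rw [pderiv_mderiv d.j t hjlow (g (d.a 0)), pderiv_mderiv d.j t hjlow (g (d.a 1))]
  -- term values
  have TA : ∀ b, Tfun H p (dA d t b) W g x
      = ((∑ c, W c x) ^ (d.k + 3))⁻¹
        * ((∏ s, mderiv p (d.i s) (W (d.a s)) x) * mderiv p (Pi.single t 1) (W b) x)
        * (mderiv p d.j (g (d.a 0)) x - mderiv p d.j (g (d.a 1)) x) := by
    intro b
    show (((∑ c, W c x) ^ (d.k + 1 + 2))⁻¹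
        * ∏ s : Fin (d.k + 1 + 2),
            mderiv p ((Fin.snoc d.i (Pi.single t 1) : Fin (d.k + 3) → Fin p → ℕ) s)
              (W ((Fin.snoc d.a b : Fin (d.k + 3) → H) s)) x)
      * (mderiv p d.j (g ((Fin.snoc d.a b : Fin (d.k + 3) → H) 0)) x
          - mderiv p d.j (g ((Fin.snoc d.a b : Fin (d.k + 3) → H) 1)) x) = _
    rw [snoc_zero, snoc_one, Fin.prod_univ_castSucc]
    simp only [Fin.snoc_castSucc, Fin.snoc_last]
  have TB : ∀ s : Fin (d.k + 2), Tfun H p (dB d t s) W g x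
      = ((∑ c, W c x) ^ (d.k + 2))⁻¹
        * ((∏ r ∈ Finset.univ.erase s, mderiv p (d.i r) (W (d.a r)) x)
            * mderiv p (d.i s + Pi.single t 1) (W (d.a s)) x)
        * (mderiv p d.j (g (d.a 0)) x - mderiv p d.j (g (d.a 1)) x) := by
    intro s
    show (((∑ c, W c x) ^ (d.k + 2))⁻¹
        * ∏ r : Fin (d.k + 2),
            mderiv p (Function.update d.i s (d.i s + Pi.single t 1) r) (W (d.a r)) x)
      * (mderiv p d.j (g (d.a 0)) x - mderiv p d.j (g (d.a 1)) x) = _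
    rw [show (fun r => mderiv p (Function.update d.i s (d.i s + Pi.single t 1) r) (W (d.a r)) x)
        = Function.update (fun r => mderiv p (d.i r) (W (d.a r)) x) s
            (mderiv p (d.i s + Pi.single t 1) (W (d.a s)) x) by
      funext r
      by_cases hr : r = s
      · subst hr; simp
      · simp [Function.update_of_ne hr]]
    rw [Finset.prod_update_of_mem (Finset.mem_univ s), Finset.sdiff_singleton_eq_erase]
    ring
  have TC : Tfun H p (dC d t) W g x
      = ((∑ c, W c x) ^ (d.k + 2))⁻¹ * (∏ s, mderiv p (d.i s) (W (d.a s)) x)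
        * (mderiv p (d.j + Pi.single t 1) (g (d.a 0)) x
            - mderiv p (d.j + Pi.single t 1) (g (d.a 1)) x) := rfl
  have SA : (∑ b, (-(d.k + 2 : ℝ)) * Tfun H p (dA d t b) W g x)
      = (∑ b, mderiv p (Pi.single t 1) (W b) x)
        * (-(d.k + 2 : ℝ) * ((∑ c, W c x) ^ (d.k + 3))⁻¹
          * (∏ s, mderiv p (d.i s) (W (d.a s)) x)
          * (mderiv p d.j (g (d.a 0)) x - mderiv p d.j (g (d.a 1)) x)) := by
    calc ∑ b, (-(d.k + 2 : ℝ)) * Tfun H p (dA d t b) W g x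
        = ∑ b, mderiv p (Pi.single t 1) (W b) x
            * (-(d.k + 2 : ℝ) * ((∑ c, W c x) ^ (d.k + 3))⁻¹
              * (∏ s, mderiv p (d.i s) (W (d.a s)) x)
              * (mderiv p d.j (g (d.a 0)) x - mderiv p d.j (g (d.a 1)) x)) :=
          Finset.sum_congr rfl fun b _ => by rw [TA b]; ring
      _ = _ := by rw [← Finset.sum_mul]
  have SB : (∑ s, Tfun H p (dB d t s) W g x)
      = (∑ s, (∏ r ∈ Finset.univ.erase s, mderiv p (d.i r) (W (d.a r)) x)
            * mderiv p (d.i s + Pi.single t 1) (W (d.a s)) x)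
        * (((∑ c, W c x) ^ (d.k + 2))⁻¹
          * (mderiv p d.j (g (d.a 0)) x - mderiv p d.j (g (d.a 1)) x)) := by
    calc ∑ s, Tfun H p (dB d t s) W g x
        = ∑ s, ((∏ r ∈ Finset.univ.erase s, mderiv p (d.i r) (W (d.a r)) x)
              * mderiv p (d.i s + Pi.single t 1) (W (d.a s)) x)
            * (((∑ c, W c x) ^ (d.k + 2))⁻¹
              * (mderiv p d.j (g (d.a 0)) x - mderiv p d.j (g (d.a 1)) x)) :=
          Finset.sum_congr rfl fun s _ => by rw [TB s]; ring
      _ = _ := by rw [← Finset.sum_mul]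
  rw [c1, c2, c3, c5, c6, TC, SA, SB]
  ring

lemma DT_span (hν : ν = ν' + Pi.single t 1) (hlow : ∀ k, k < t → ν' k = 0)
    (hνq : ∑ k, ν k ≤ q) (hd : d ∈ Con H p ν') :
    (fun (Wg : {Wg // Adm H p q Wg}) => pderiv p t (Tfun H p d Wg.1.1 Wg.1.2))
      ∈ Submodule.span ℝ (T H p q '' Con H p ν) := by
  classical
  have heq : (fun (Wg : {Wg // Adm H p q Wg}) => pderiv p t (Tfun H p d Wg.1.1 Wg.1.2))
      = (∑ b, (-(d.k + 2 : ℝ)) • T H p q (dA d t b))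
        + (∑ s, T H p q (dB d t s)) + T H p q (dC d t) := by
    funext Wg x
    obtain ⟨⟨W, g⟩, hadm⟩ := Wg
    obtain ⟨hnn, hW, hg, hpos⟩ := hadm
    simp only [Pi.add_apply, Finset.sum_apply, Pi.smul_apply, smul_eq_mul]
    exact DT_pointwise hW hg hpos hν hlow hνq hd x
  rw [heq]
  refine Submodule.add_mem _ (Submodule.add_mem _ ?_ ?_) ?_
  · exact Submodule.sum_mem _ fun b _ => Submodule.smul_mem _ _
      (Submodule.subset_span ⟨dA d t b, mem_dA hν hd b, rfl⟩)
  · exact Submodule.sum_mem _ fun s _ =>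
      Submodule.subset_span ⟨dB d t s, mem_dB hν hd s, rfl⟩
  · exact Submodule.subset_span ⟨dC d t, mem_dC hν hd, rfl⟩

/-- the pair indices occurring in the base difference terms -/
def d1 (ν' : Fin p → ℕ) (t : Fin p) (a b : H) : Idx H p :=
  ⟨0, ![a, b], ![Pi.single t 1, 0], ν'⟩

def d2 (ν' : Fin p → ℕ) (t : Fin p) (a b : H) : Idx H p :=
  ⟨0, ![a, b], ![0, Pi.single t 1], ν'⟩

lemma mem_d1 (hν : ν = ν' + Pi.single t 1) (hj : ∀ k, ν' k ≤ ν k) {a b : H} (hab : a < b) :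
    d1 ν' t a b ∈ Con H p ν ∧ d2 ν' t a b ∈ Con H p ν := by
  have hsν := sum_nu hν
  have hνν' : ν' ≠ ν := by
    intro hc
    rw [hc] at hsν
    omega
  have hxt : ∀ k, (Pi.single t 1 : Fin p → ℕ) k ≤ ν k := by
    intro k
    by_cases hk : k = t
    · subst hk
      have := nu_t hν
      simp only [Pi.single_eq_same]
      omega
    · simp [Pi.single_apply, hk]
  have hsum2 : ∀ k, (Pi.single t 1 : Fin p → ℕ) k + 0 = ν k - ν' k := by
    intro k
    by_cases hk : k = t
    · subst hk
      have := nu_t hν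
      simp only [Pi.single_eq_same]
      omega
    · have := nu_ne hν k hk
      simp [Pi.single_apply, hk, this]
  constructor
  · refine ⟨by show (0:ℕ) + 1 ≤ ∑ k, ν k; omega, ?_, hj, hνν', ?_, ?_⟩
    · show (![a, b] : Fin 2 → H) 0 < (![a, b] : Fin 2 → H) 1
      simpa using hab
    · intro s k
      refine Fin.cases ?_ (fun s' => ?_) s
      · simpa [d1] using hxt k
      · simp only [d1]
        have : (![Pi.single t 1, 0] : Fin 2 → Fin p → ℕ) s'.succ = ![(0 : Fin p → ℕ)] s' := rfl
        simp [Fin.eq_zero s']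
    · intro k
      show (![Pi.single t 1, (0 : Fin p → ℕ)] 0) k + ((![Pi.single t 1, (0 : Fin p → ℕ)] 1) k + 0)
          = ν k - ν' k
      simpa using hsum2 k
  · refine ⟨by show (0:ℕ) + 1 ≤ ∑ k, ν k; omega, ?_, hj, hνν', ?_, ?_⟩
    · show (![a, b] : Fin 2 → H) 0 < (![a, b] : Fin 2 → H) 1
      simpa using hab
    · intro s k
      refine Fin.cases ?_ (fun s' => ?_) s
      · simp [d2]
      · simp only [d2, Fin.eq_zero s']
        simpa using hxt k
    · intro k
      show (![(0 : Fin p → ℕ), Pi.single t 1] 0) k + ((![(0 : Fin p → ℕ), Pi.single t 1] 1) k + 0)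
          = ν k - ν' k
      have := hsum2 k
      simp only [Matrix.cons_val_zero, Matrix.cons_val_one, Matrix.head_cons, Pi.zero_apply]
      omega

lemma B_mem (hν : ν = ν' + Pi.single t 1) (hνq : ∑ k, ν k ≤ q) :
    (fun (Wg : {Wg // Adm H p q Wg}) x => ((∑ a, Wg.1.1 a x) ^ 2)⁻¹
        * ∑ a, ∑ b ∈ Finset.univ.filter (fun b => a < b),
            (Wg.1.1 b x * pderiv p t (Wg.1.1 a) x
              - pderiv p t (Wg.1.1 b) x * Wg.1.1 a x)
            * (mderiv p ν' (Wg.1.2 a) x - mderiv p ν' (Wg.1.2 b) x))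
      ∈ Submodule.span ℝ (T H p q '' Con H p ν) := by
  classical
  have hj : ∀ k, ν' k ≤ ν k := nu'_le hν
  have heq : (fun (Wg : {Wg // Adm H p q Wg}) x => ((∑ a, Wg.1.1 a x) ^ 2)⁻¹
        * ∑ a, ∑ b ∈ Finset.univ.filter (fun b => a < b),
            (Wg.1.1 b x * pderiv p t (Wg.1.1 a) x
              - pderiv p t (Wg.1.1 b) x * Wg.1.1 a x)
            * (mderiv p ν' (Wg.1.2 a) x - mderiv p ν' (Wg.1.2 b) x))
      = ∑ a, ∑ b ∈ Finset.univ.filter (fun b => a < b),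
          (T H p q (d1 ν' t a b) - T H p q (d2 ν' t a b)) := by
    funext Wg x
    simp only [Finset.sum_apply, Pi.sub_apply]
    rw [Finset.mul_sum]
    refine Finset.sum_congr rfl fun a _ => ?_
    rw [Finset.mul_sum]
    refine Finset.sum_congr rfl fun b _ => ?_
    have e1 : T H p q (d1 ν' t a b) Wg x
        = ((∑ c, Wg.1.1 c x) ^ 2)⁻¹
          * (pderiv p t (Wg.1.1 a) x * Wg.1.1 b x)
          * (mderiv p ν' (Wg.1.2 a) x - mderiv p ν' (Wg.1.2 b) x) := by
      show ((∑ c, Wg.1.1 c x) ^ (0 + 2))⁻¹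
          * (∏ s : Fin 2, mderiv p (![Pi.single t 1, 0] s) (Wg.1.1 (![a, b] s)) x)
          * (mderiv p ν' (Wg.1.2 (![a, b] 0)) x - mderiv p ν' (Wg.1.2 (![a, b] 1)) x) = _
      rw [Fin.prod_univ_two]
      simp only [Matrix.cons_val_zero, Matrix.cons_val_one, Matrix.head_cons, mderiv_zero,
        zero_add, mderiv_single]
    have e2 : T H p q (d2 ν' t a b) Wg x
        = ((∑ c, Wg.1.1 c x) ^ 2)⁻¹
          * (Wg.1.1 a x * pderiv p t (Wg.1.1 b) x)
          * (mderiv p ν' (Wg.1.2 a) x - mderiv p ν' (Wg.1.2 b) x) := by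
      show ((∑ c, Wg.1.1 c x) ^ (0 + 2))⁻¹
          * (∏ s : Fin 2, mderiv p (![0, Pi.single t 1] s) (Wg.1.1 (![a, b] s)) x)
          * (mderiv p ν' (Wg.1.2 (![a, b] 0)) x - mderiv p ν' (Wg.1.2 (![a, b] 1)) x) = _
      rw [Fin.prod_univ_two]
      simp only [Matrix.cons_val_zero, Matrix.cons_val_one, Matrix.head_cons, mderiv_zero,
        zero_add, mderiv_single]
    rw [e1, e2]
    ring
  rw [heq]
  refine Submodule.sum_mem _ fun a _ => Submodule.sum_mem _ fun b hb => ?_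
  have hab : a < b := by
    simpa using (Finset.mem_filter.1 hb).2
  exact Submodule.sub_mem _
    (Submodule.subset_span ⟨d1 ν' t a b, (mem_d1 hν hj hab).1, rfl⟩)
    (Submodule.subset_span ⟨d2 ν' t a b, (mem_d1 hν hj hab).2, rfl⟩)

noncomputable def vf (H : Type*) [Fintype H] [LinearOrder H] (p q : ℕ) (ν : Fin p → ℕ) :
    {Wg // Adm H p q Wg} → (Fin p → ℝ) → ℝ := fun Wg x =>
  mderiv p ν (fun y => (∑ a, Wg.1.1 a y)⁻¹ * ∑ a, Wg.1.1 a y * Wg.1.2 a y) x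
    - (∑ a, Wg.1.1 a x)⁻¹ * ∑ a, Wg.1.1 a x * mderiv p ν (Wg.1.2 a) x

lemma vf_eq_zero {H : Type*} [Fintype H] [LinearOrder H] {q : ℕ} (ν' : Fin p → ℕ)
    (hz : ∀ k, ν' k = 0) : vf H p q ν' = 0 := by
  funext Wg x
  show mderiv p ν' (fun y => (∑ a, Wg.1.1 a y)⁻¹ * ∑ a, Wg.1.1 a y * Wg.1.2 a y) x
    - (∑ a, Wg.1.1 a x)⁻¹ * ∑ a, Wg.1.1 a x * mderiv p ν' (Wg.1.2 a) x = 0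
  rw [mderiv_zero' ν' hz]
  have : ∀ a : H, Wg.1.1 a x * mderiv p ν' (Wg.1.2 a) x = Wg.1.1 a x * Wg.1.2 a x :=
    fun a => by rw [mderiv_zero' ν' hz]
  rw [Finset.sum_congr rfl fun a _ => this a]
  ring

lemma main_aux {H : Type*} [Fintype H] [LinearOrder H] {q : ℕ}
    {ν ν' : Fin p → ℕ} {t : Fin p}
    (hν : ν = ν' + Pi.single t 1) (hlow : ∀ k, k < t → ν' k = 0)
    (hνq : ∑ k, ν k ≤ q)
    (hmem : vf H p q ν' ∈ Submodule.span ℝ (T H p q '' Con H p ν')) :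
    vf H p q ν ∈ Submodule.span ℝ (T H p q '' Con H p ν) := by
  classical
  have hsν := sum_nu hν
  have hν'q : ∑ k, ν' k + 1 ≤ q := by omega
  have hq1 : 1 ≤ q := by omega
  rw [Submodule.mem_span_set] at hmem
  obtain ⟨l, hsupp, hls⟩ := hmem
  have hch : ∀ u ∈ l.support, ∃ dd, dd ∈ Con H p ν' ∧ T H p q dd = u := fun u hu => by
    obtain ⟨dd, hdd, he⟩ := hsupp hu
    exact ⟨dd, hdd, he⟩
  choose dd hdd hTdd using hch
  have hkey : vf H p q ν
      = (fun (Wg : {Wg // Adm H p q Wg}) x => ((∑ a, Wg.1.1 a x) ^ 2)⁻¹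
          * ∑ a, ∑ b ∈ Finset.univ.filter (fun b => a < b),
              (Wg.1.1 b x * pderiv p t (Wg.1.1 a) x
                - pderiv p t (Wg.1.1 b) x * Wg.1.1 a x)
              * (mderiv p ν' (Wg.1.2 a) x - mderiv p ν' (Wg.1.2 b) x))
        + ∑ u ∈ l.support, l u • (fun Wg => pderiv p t (u Wg)) := by
    funext Wg x
    have hW := Wg.2.2.1
    have hg := Wg.2.2.2.1
    have hpos := Wg.2.2.2.2
    have hWd : ∀ (a : H) (y : Fin p → ℝ), DifferentiableAt ℝ (Wg.1.1 a) y := fun a y =>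
      ((hW a).differentiable (by exact_mod_cast Nat.one_le_iff_ne_zero.mp hq1)).differentiableAt
    have hFd : ∀ y, DifferentiableAt ℝ (fun z => ∑ a, Wg.1.1 a z) y := fun y =>
      DifferentiableAt.fun_sum (fun a _ => hWd a y)
    have hFx : (∑ a, Wg.1.1 a x) ≠ 0 := ne_of_gt (hpos x)
    have hmd : ∀ (a : H) (y : Fin p → ℝ),
        DifferentiableAt ℝ (mderiv p ν' (Wg.1.2 a)) y := fun a y =>
      (differentiable_mderiv ν' hν'q (hg a)) y
    have hud : ∀ u ∈ l.support, ∀ y, DifferentiableAt ℝ (u Wg) y := fun u hu y => by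
      rw [← hTdd u hu]
      exact (diff_Tfun hW hg hpos hν'q (hdd u hu)) y
    have hrep : mderiv p ν' (fun y => (∑ a, Wg.1.1 a y)⁻¹ * ∑ a, Wg.1.1 a y * Wg.1.2 a y)
        = fun y => (∑ a, Wg.1.1 a y)⁻¹ * ∑ a, Wg.1.1 a y * mderiv p ν' (Wg.1.2 a) y
            + ∑ u ∈ l.support, l u * u Wg y := by
      funext y
      have h1 := congrFun (congrFun hls Wg) y
      simp only [Finsupp.sum, Finset.sum_apply, Pi.smul_apply, smul_eq_mul] at h1
      have h2 : (vf H p q ν') Wg y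
          = mderiv p ν' (fun z => (∑ a, Wg.1.1 a z)⁻¹ * ∑ a, Wg.1.1 a z * Wg.1.2 a z) y
            - (∑ a, Wg.1.1 a y)⁻¹ * ∑ a, Wg.1.1 a y * mderiv p ν' (Wg.1.2 a) y := rfl
      rw [h2] at h1
      linarith [h1]
    have e0 : mderiv p ν
        (fun y => (∑ a, Wg.1.1 a y)⁻¹ * ∑ a, Wg.1.1 a y * Wg.1.2 a y) x
        = pderiv p t (mderiv p ν'
            (fun y => (∑ a, Wg.1.1 a y)⁻¹ * ∑ a, Wg.1.1 a y * Wg.1.2 a y)) x := by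
      rw [hν, pderiv_mderiv ν' t hlow]
    show mderiv p ν (fun y => (∑ a, Wg.1.1 a y)⁻¹ * ∑ a, Wg.1.1 a y * Wg.1.2 a y) x
        - (∑ a, Wg.1.1 a x)⁻¹ * ∑ a, Wg.1.1 a x * mderiv p ν (Wg.1.2 a) x = _
    rw [e0, hrep]
    have hAd : DifferentiableAt ℝ
        (fun y => (∑ a, Wg.1.1 a y)⁻¹ * ∑ a, Wg.1.1 a y * mderiv p ν' (Wg.1.2 a) y) x :=
      ((hFd x).inv hFx).mul (DifferentiableAt.fun_sum fun a _ => (hWd a x).fun_mul (hmd a x))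
    have hBd : DifferentiableAt ℝ (fun y => ∑ u ∈ l.support, l u * u Wg y) x :=
      DifferentiableAt.fun_sum fun u hu => (hud u hu x).const_mul (l u)
    rw [pderiv_add hAd hBd,
      pderiv_sum l.support _ (fun u hu => (hud u hu x).const_mul (l u)),
      Finset.sum_congr rfl (fun u hu => pderiv_const_mul (l u) (hud u hu x)),
      D1 hW hpos hq1 t x (fun a => mderiv p ν' (Wg.1.2 a)) (fun a => hmd a x),
      show (∑ a, Wg.1.1 a x * pderiv p t (mderiv p ν' (Wg.1.2 a)) x)
          = ∑ a, Wg.1.1 a x * mderiv p ν (Wg.1.2 a) x from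
        Finset.sum_congr rfl fun a _ => by rw [hν, pderiv_mderiv ν' t hlow]]
    simp only [Pi.add_apply, Finset.sum_apply, Pi.smul_apply, smul_eq_mul]
    ring
  rw [hkey]
  refine Submodule.add_mem _ (B_mem hν hνq) ?_
  refine Submodule.sum_mem _ fun u hu => Submodule.smul_mem _ _ ?_
  rw [← hTdd u hu]
  exact DT_span hν hlow hνq (hdd u hu)

lemma main {H : Type*} [Fintype H] [LinearOrder H] {q : ℕ} (n : ℕ) :
    ∀ ν : Fin p → ℕ, ∑ k, ν k = n + 1 → ∑ k, ν k ≤ q →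
      vf H p q ν ∈ Submodule.span ℝ (T H p q '' Con H p ν) := by
  induction n with
  | zero =>
    intro ν hs hq
    obtain ⟨t, ν', hlow0, hν, hsum, _⟩ := decompose ν (by omega)
    have hz : ∀ k, ν' k = 0 := fun k =>
      Finset.sum_eq_zero_iff.1 (by omega) k (Finset.mem_univ k)
    refine main_aux hν (fun k _ => hz k) hq ?_
    rw [vf_eq_zero ν' hz]
    exact Submodule.zero_mem _
  | succ n ih =>
    intro ν hs hq
    obtain ⟨t, ν', hlow0, hν, hsum, _⟩ := decompose ν (by omega)
    exact main_aux hν hlow0 hq (ih ν' (by omega) (by omega))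

end DT

section Extract

variable {H : Type*} [Fintype H] [LinearOrder H] {p q : ℕ}

/-- the correction sum in the statement format -/
noncomputable def QS (ν : Fin p → ℕ)
    (c : (k : ℕ) → (Fin (k + 2) → H) → (Fin (k + 2) → (Fin p → ℕ)) → (Fin p → ℕ) → ℝ)
    (W g : H → (Fin p → ℝ) → ℝ) (x : Fin p → ℝ) : ℝ :=
  ∑ k ∈ Finset.range (∑ t, ν t), ∑ j ∈ (Finset.Iic ν).erase ν,
    ((∑ a, W a x) ^ (k + 2))⁻¹ *
      ∑ a ∈ Finset.univ.filter (fun a : Fin (k + 2) → H => a 0 < a 1),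
        ∑ i ∈ (Fintype.piFinset fun _ : Fin (k + 2) => Finset.Iic ν).filter
            (fun i => (∑ s, i s) = ν - j),
          c k a i j * (∏ s, mderiv p (i s) (W (a s)) x) *
            (mderiv p j (g (a 0)) x - mderiv p j (g (a 1)) x)

lemma QS_add (ν : Fin p → ℕ) (c1 c2) (W g : H → (Fin p → ℝ) → ℝ) (x : Fin p → ℝ) :
    QS ν (fun k a i j => c1 k a i j + c2 k a i j) W g x
      = QS ν c1 W g x + QS ν c2 W g x := by
  simp only [QS]
  rw [← Finset.sum_add_distrib]
  refine Finset.sum_congr rfl fun k _ => ?_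
  rw [← Finset.sum_add_distrib]
  refine Finset.sum_congr rfl fun j _ => ?_
  rw [← mul_add, ← Finset.sum_add_distrib]
  refine congrArg _ (Finset.sum_congr rfl fun a _ => ?_)
  rw [← Finset.sum_add_distrib]
  exact Finset.sum_congr rfl fun i _ => by ring

lemma QS_smul (ν : Fin p → ℕ) (r : ℝ) (c) (W g : H → (Fin p → ℝ) → ℝ) (x : Fin p → ℝ) :
    QS ν (fun k a i j => r * c k a i j) W g x = r * QS ν c W g x := by
  simp only [QS, Finset.mul_sum]
  exact Finset.sum_congr rfl fun k _ => Finset.sum_congr rfl fun j _ =>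
    Finset.sum_congr rfl fun a _ => Finset.sum_congr rfl fun i _ => by ring

lemma QS_zero (ν : Fin p → ℕ) (W g : H → (Fin p → ℝ) → ℝ) (x : Fin p → ℝ) :
    QS ν (fun _ _ _ _ => (0:ℝ)) W g x = 0 := by
  simp [QS]

/-- the submodule of functionals representable in the statement format -/
noncomputable def M (ν : Fin p → ℕ) :
    Submodule ℝ ({Wg // Adm H p q Wg} → (Fin p → ℝ) → ℝ) where
  carrier := {v | ∃ c, ∀ (Wg : {Wg // Adm H p q Wg}) (x : Fin p → ℝ),
    v Wg x = QS ν c Wg.1.1 Wg.1.2 x}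
  zero_mem' := ⟨fun _ _ _ _ => 0, fun Wg x => by rw [QS_zero]; rfl⟩
  add_mem' := by
    rintro v1 v2 ⟨c1, h1⟩ ⟨c2, h2⟩
    exact ⟨fun k a i j => c1 k a i j + c2 k a i j, fun Wg x => by
      rw [QS_add, ← h1 Wg x, ← h2 Wg x]; rfl⟩
  smul_mem' := by
    rintro r v ⟨c, h⟩
    exact ⟨fun k a i j => r * c k a i j, fun Wg x => by
      rw [QS_smul, ← h Wg x]; rfl⟩

lemma T_mem_M {ν : Fin p → ℕ} {d : Idx H p} (hd : d ∈ Con H p ν) :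
    T H p q d ∈ M (q := q) ν := by
  classical
  obtain ⟨k₀, a₀, i₀, j₀⟩ := d
  obtain ⟨h1, h2, h3, h4, h5, h6⟩ := hd
  refine ⟨fun k a i j => if (⟨k, a, i, j⟩ : Idx H p) = ⟨k₀, a₀, i₀, j₀⟩ then 1 else 0,
    fun Wg x => ?_⟩
  have h1' : k₀ + 1 ≤ ∑ k, ν k := h1
  have hk : k₀ ∈ Finset.range (∑ t, ν t) := Finset.mem_range.2 (by omega)
  have hj : j₀ ∈ (Finset.Iic ν).erase ν :=
    Finset.mem_erase.2 ⟨h4, Finset.mem_Iic.2 h3⟩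
  have ha : a₀ ∈ Finset.univ.filter (fun a : Fin (k₀ + 2) → H => a 0 < a 1) :=
    Finset.mem_filter.2 ⟨Finset.mem_univ _, h2⟩
  have hi : i₀ ∈ (Fintype.piFinset fun _ : Fin (k₀ + 2) => Finset.Iic ν).filter
      (fun i => (∑ s, i s) = ν - j₀) := by
    refine Finset.mem_filter.2 ⟨Fintype.mem_piFinset.2 fun s => Finset.mem_Iic.2 (h5 s), ?_⟩
    funext k
    rw [Finset.sum_apply, Pi.sub_apply]
    exact h6 k
  rw [show QS ν _ Wg.1.1 Wg.1.2 x
      = ((∑ a, Wg.1.1 a x) ^ (k₀ + 2))⁻¹ *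
          (1 * (∏ s, mderiv p (i₀ s) (Wg.1.1 (a₀ s)) x) *
            (mderiv p j₀ (Wg.1.2 (a₀ 0)) x - mderiv p j₀ (Wg.1.2 (a₀ 1)) x)) from ?_]
  · show T H p q ⟨k₀, a₀, i₀, j₀⟩ Wg x = _
    show ((∑ b, Wg.1.1 b x) ^ (k₀ + 2))⁻¹ * (∏ s, mderiv p (i₀ s) (Wg.1.1 (a₀ s)) x) *
        (mderiv p j₀ (Wg.1.2 (a₀ 0)) x - mderiv p j₀ (Wg.1.2 (a₀ 1)) x) = _
    ring
  · rw [QS]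
    rw [Finset.sum_eq_single_of_mem k₀ hk ?_]
    rotate_left
    · intro k _ hne
      refine Finset.sum_eq_zero fun j _ => ?_
      rw [Finset.sum_eq_zero fun a _ => Finset.sum_eq_zero fun i _ => ?_, mul_zero]
      rw [if_neg fun hE : (⟨k, a, i, j⟩ : Idx H p) = ⟨k₀, a₀, i₀, j₀⟩ =>
        hne (congrArg Idx.k hE), zero_mul, zero_mul]
    rw [Finset.sum_eq_single_of_mem j₀ hj ?_]
    rotate_left
    · intro j _ hne
      rw [Finset.sum_eq_zero fun a _ => Finset.sum_eq_zero fun i _ => ?_, mul_zero]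
      rw [if_neg fun hE : (⟨k₀, a, i, j⟩ : Idx H p) = ⟨k₀, a₀, i₀, j₀⟩ =>
        hne (congrArg Idx.j hE), zero_mul, zero_mul]
    rw [Finset.sum_eq_single_of_mem a₀ ha ?_]
    rotate_left
    · intro a _ hne
      refine Finset.sum_eq_zero fun i _ => ?_
      have hcond : ¬((⟨k₀, a, i, j₀⟩ : Idx H p) = ⟨k₀, a₀, i₀, j₀⟩) := by
        intro hE
        simp only [Idx.mk.injEq, heq_eq_eq, true_and] at hE
        exact hne hE.1
      rw [if_neg hcond, zero_mul, zero_mul]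
    rw [Finset.sum_eq_single_of_mem i₀ hi ?_]
    rotate_left
    · intro i _ hne
      have hcond : ¬((⟨k₀, a₀, i, j₀⟩ : Idx H p) = ⟨k₀, a₀, i₀, j₀⟩) := by
        intro hE
        simp only [Idx.mk.injEq, heq_eq_eq, true_and] at hE
        exact hne hE.1
      rw [if_neg hcond, zero_mul, zero_mul]
    rw [if_pos rfl]

end Extract

end Stmt3Aux

/-- Let `H` be a finite nonempty linearly ordered set, `p, q ≥ 1`,
and `ν` a `p`-dimensional multi-index with `1 ≤ |ν| ≤ q`.  There exist real constants
`c k a i j` (indexed over `k` with tuples of length `k + 2`, reparametrizing the paper's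
`k = 2, …, |ν|+1`), depending only on the indices, such that for all `q`-times
differentiable `W a : ℝ^p → [0,∞)`, `g a : ℝ^p → ℝ` with `W := ∑_a W a > 0` everywhere,
the function `ḡ = W⁻¹ ∑_a W a g a` satisfies
`ḡ^{(ν)} = W⁻¹ ∑_a W a g_a^{(ν)} + ∑_{k=2}^{|ν|+1} ∑_{0 ≤ j < ν} W^{-k} U_{k,ν,j}`,
where `U_{k,ν,j} = ∑ c_{k,ν}(a₁,…,a_k,i₁,…,i_k) (∏_s W_{a_s}^{(i_s)}) (g_{a₁}^{(j)} − g_{a₂}^{(j)})`,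
the inner sum running over `a₁,…,a_k ∈ H` with `a₁ < a₂` and `i₁ + ⋯ + i_k = ν − j`. -/
theorem stmt3 {H : Type*} [Fintype H] [Nonempty H] [LinearOrder H]
    (p q : ℕ) (hp : 1 ≤ p) (hq : 1 ≤ q)
    (ν : Fin p → ℕ) (hν1 : 1 ≤ ∑ k, ν k) (hνq : ∑ k, ν k ≤ q) :
    ∃ c : (k : ℕ) → (Fin (k + 2) → H) → (Fin (k + 2) → (Fin p → ℕ)) → (Fin p → ℕ) → ℝ,
      ∀ W g : H → (Fin p → ℝ) → ℝ,
        (∀ a x, 0 ≤ W a x) → (∀ a, ContDiff ℝ q (W a)) → (∀ a, ContDiff ℝ q (g a)) →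
        (∀ x, 0 < ∑ a, W a x) →
        ∀ x : Fin p → ℝ,
          mderiv p ν (fun y => (∑ a, W a y)⁻¹ * ∑ a, W a y * g a y) x =
            (∑ a, W a x)⁻¹ * (∑ a, W a x * mderiv p ν (g a) x) +
              ∑ k ∈ Finset.range (∑ t, ν t), ∑ j ∈ (Finset.Iic ν).erase ν,
                ((∑ a, W a x) ^ (k + 2))⁻¹ *
                  ∑ a ∈ Finset.univ.filter (fun a : Fin (k + 2) → H => a 0 < a 1),
                    ∑ i ∈ (Fintype.piFinset fun _ : Fin (k + 2) => Finset.Iic ν).filter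
                        (fun i => (∑ s, i s) = ν - j),
                      c k a i j * (∏ s, mderiv p (i s) (W (a s)) x) *
                        (mderiv p j (g (a 0)) x - mderiv p j (g (a 1)) x) := by
  classical
  have hv := Stmt3Aux.main (H := H) (q := q) (∑ k, ν k - 1) ν (by omega) (by omega)
  have hsub : Submodule.span ℝ (Stmt3Aux.T H p q '' Stmt3Aux.Con H p ν)
      ≤ Stmt3Aux.M (q := q) ν := by
    rw [Submodule.span_le]
    rintro u ⟨d, hd, rfl⟩
    exact Stmt3Aux.T_mem_M hd
  obtain ⟨c, hc⟩ := hsub hv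
  refine ⟨c, ?_⟩
  intro W g hnn hW hg hpos x
  have h := hc ⟨(W, g), ⟨hnn, hW, hg, hpos⟩⟩ x
  have h2 : Stmt3Aux.vf H p q ν ⟨(W, g), ⟨hnn, hW, hg, hpos⟩⟩ x
      = mderiv p ν (fun y => (∑ a, W a y)⁻¹ * ∑ a, W a y * g a y) x
        - (∑ a, W a x)⁻¹ * ∑ a, W a x * mderiv p ν (g a) x := rfl
  rw [h2] at h
  show mderiv p ν (fun y => (∑ a, W a y)⁻¹ * ∑ a, W a y * g a y) x
      = (∑ a, W a x)⁻¹ * (∑ a, W a x * mderiv p ν (g a) x) + Stmt3Aux.QS ν c W g x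
  linarith [h]
end

section
/- Let p ≥ 1, l ≥ 1, let h : ℝ^p → ℝ be l-times continuously differentiable, and fix ε ∈ ℝ^p. If M ≥ 0 is such that |h^{(μ)}(ε)| ≤ M for every multi-index μ with 1 ≤ |μ| ≤ l, and if moreover this bound holds for all points in a neighborhood of ε (i.e. |h^{(μ)}(ε')| ≤ M for all ε' near ε and all 1 ≤ |μ| ≤ l), then for every multi-index ν with |ν| = l, |(e^h)^{(ν)}(ε)| ≤ (l + M)^l · e^{h(ε)}. -/
/-! ### Auxiliary machinery -/

/-- Iterated partial derivatives along a list of directions; the head of the list is the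
outermost (last applied) derivative. -/
noncomputable def pcomp (p : ℕ) : List (Fin p) → ((Fin p → ℝ) → ℝ) → ((Fin p → ℝ) → ℝ)
  | [], f => f
  | k :: ks, f => pderiv p k (pcomp p ks f)

/-- All ways to prepend direction `k` to one of the factors of a term. -/
def insk (p : ℕ) (k : Fin p) : List (List (Fin p)) → List (List (List (Fin p)))
  | [] => []
  | κ :: T => ((k :: κ) :: T) :: (insk p k T).map (fun T' => κ :: T')

lemma contDiff_pderiv {p n : ℕ} {f : (Fin p → ℝ) → ℝ} (hf : ContDiff ℝ (n + 1 : ℕ) f)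
    (k : Fin p) : ContDiff ℝ (n : ℕ) (pderiv p k f) := by
  have h1 : ContDiff ℝ (n : ℕ) (fderiv ℝ f) := by
    apply hf.fderiv_right
    exact_mod_cast le_of_eq (by push_cast; ring)
  exact (ContinuousLinearMap.apply ℝ ℝ (Pi.single k 1)).contDiff.comp h1

lemma contDiff_pcomp {p : ℕ} (κ : List (Fin p)) {n : ℕ} {f : (Fin p → ℝ) → ℝ}
    (hf : ContDiff ℝ (κ.length + n : ℕ) f) : ContDiff ℝ (n : ℕ) (pcomp p κ f) := by
  induction κ generalizing n with
  | nil => simpa [pcomp] using hf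
  | cons k ks ih =>
    have : ContDiff ℝ (n + 1 : ℕ) (pcomp p ks f) := by
      apply ih
      convert hf using 2
      simp [List.length_cons]; ring
    exact contDiff_pderiv this k

lemma hasDerivAt_line {p : ℕ} {f : (Fin p → ℝ) → ℝ} {x : Fin p → ℝ}
    (hf : DifferentiableAt ℝ f x) (k : Fin p) :
    HasDerivAt (fun t : ℝ => f (x + t • (Pi.single k 1 : Fin p → ℝ))) (pderiv p k f x) 0 := by
  have hline : HasDerivAt (fun t : ℝ => x + t • (Pi.single k 1 : Fin p → ℝ))
      ((1 : ℝ) • (Pi.single k 1 : Fin p → ℝ)) 0 :=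
    ((hasDerivAt_id (0:ℝ)).smul_const _).const_add x
  have := hf.hasFDerivAt.comp_hasDerivAt_of_eq 0 hline (by simp)
  simpa [pderiv, Function.comp_def] using this

lemma pderiv_comm {p : ℕ} {g : (Fin p → ℝ) → ℝ} (hg : ContDiff ℝ (2 : ℕ) g) (a b : Fin p) :
    pderiv p a (pderiv p b g) = pderiv p b (pderiv p a g) := by
  have hdiff : ∀ y, HasFDerivAt g (fderiv ℝ g y) y := fun y =>
    (hg.differentiable (by norm_num) y).hasFDerivAt
  have hfd : ContDiff ℝ (1 : ℕ) (fderiv ℝ g) := by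
    apply hg.fderiv_right; norm_cast
  funext x
  have hx : HasFDerivAt (fderiv ℝ g) (fderiv ℝ (fderiv ℝ g) x) x :=
    ((hfd.differentiable (by norm_num)) x).hasFDerivAt
  have hsymm := second_derivative_symmetric hdiff hx (Pi.single a 1) (Pi.single b 1)
  have key : ∀ c d : Fin p, pderiv p c (pderiv p d g) x =
      fderiv ℝ (fderiv ℝ g) x (Pi.single c 1) (Pi.single d 1) := by
    intro c d
    have : pderiv p d g = fun y => (fderiv ℝ g y) (Pi.single d 1) := rfl
    rw [pderiv, this]
    have hc : DifferentiableAt ℝ (fderiv ℝ g) x := hx.differentiableAt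
    rw [fderiv_clm_apply hc (differentiableAt_const _)]
    simp
  rw [key a b, key b a, hsymm]

lemma pcomp_perm {p l : ℕ} {h : (Fin p → ℝ) → ℝ} (hh : ContDiff ℝ (l : ℕ) h)
    {κ κ' : List (Fin p)} (hperm : κ.Perm κ') (hlen : κ.length ≤ l) :
    pcomp p κ h = pcomp p κ' h := by
  induction hperm with
  | nil => rfl
  | cons a hp ih =>
    simp only [pcomp]
    rw [ih (le_trans (by simp) hlen)]
  | swap a b rest =>
    simp only [pcomp]
    have hlen' : rest.length + 2 ≤ l := by simp at hlen; omega
    have : ContDiff ℝ (2 : ℕ) (pcomp p rest h) :=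
      contDiff_pcomp rest (hh.of_le (by exact_mod_cast hlen'))
    exact pderiv_comm this b a
  | trans h1 h2 ih1 ih2 =>
    rw [ih1 hlen, ih2 (h1.length_eq ▸ hlen)]

lemma pcomp_replicate_append {p : ℕ} (k : Fin p) (n : ℕ) (κ : List (Fin p))
    (f : (Fin p → ℝ) → ℝ) :
    pcomp p (List.replicate n k ++ κ) f = (pderiv p k)^[n] (pcomp p κ f) := by
  induction n with
  | zero => simp [pcomp]
  | succ m ih =>
    rw [List.replicate_succ, List.cons_append, pcomp, ih, Function.iterate_succ_apply']

lemma mderiv_eq_pcomp {p : ℕ} (ν : Fin p → ℕ) (f : (Fin p → ℝ) → ℝ) :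
    mderiv p ν f = pcomp p ((List.finRange p).flatMap fun k => List.replicate (ν k) k) f := by
  rw [mderiv]
  generalize List.finRange p = L
  induction L with
  | nil => rfl
  | cons k ks ih =>
    simp only [List.foldr_cons, List.flatMap_cons, Function.comp_apply, ih,
      pcomp_replicate_append]

lemma hasDerivAt_list_sum {ι : Type*} (L : List ι) (f : ι → ℝ → ℝ) (f' : ι → ℝ) (t : ℝ)
    (hf : ∀ a ∈ L, HasDerivAt (f a) (f' a) t) :
    HasDerivAt (fun t => (L.map (fun a => f a t)).sum) ((L.map f').sum) t := by
  induction L with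
  | nil => simpa using hasDerivAt_const t (0 : ℝ)
  | cons a L ih =>
    simp only [List.map_cons, List.sum_cons]
    exact (hf a (by simp)).add (ih fun b hb => hf b (by simp [hb]))

lemma hasDerivAt_insk {p : ℕ} (k : Fin p) (T : List (List (Fin p)))
    (v : List (Fin p) → ℝ → ℝ) (t₀ : ℝ)
    (hv : ∀ κ ∈ T, HasDerivAt (v κ) (v (k :: κ) t₀) t₀) :
    HasDerivAt (fun t => (T.map (fun κ => v κ t)).prod)
      (((insk p k T).map (fun T' => (T'.map (fun κ => v κ t₀)).prod)).sum) t₀ := by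
  induction T with
  | nil => simpa [insk] using hasDerivAt_const t₀ (1 : ℝ)
  | cons κ T ih =>
    have h1 : HasDerivAt (v κ) (v (k :: κ) t₀) t₀ := hv κ (by simp)
    have h2 := ih fun κ' hκ' => hv κ' (by simp [hκ'])
    have : HasDerivAt (fun t => v κ t * (T.map (fun κ => v κ t)).prod) _ t₀ := h1.mul h2
    simp only [List.map_cons, List.prod_cons]
    convert this using 1
    simp only [insk, List.map_cons, List.sum_cons, List.map_map]
    rw [List.prod_cons]
    congr 1
    simp only [Function.comp_def, List.map_cons, List.prod_cons]
    rw [List.sum_map_mul_left]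

lemma list_abs_sum_le {ι : Type*} (L : List ι) (f g : ι → ℝ) (h : ∀ a ∈ L, |f a| ≤ g a) :
    |(L.map f).sum| ≤ (L.map g).sum := by
  induction L with
  | nil => simp
  | cons a L ih =>
    simp only [List.map_cons, List.sum_cons]
    refine le_trans (abs_add_le _ _) ?_
    exact add_le_add (h a (by simp)) (ih fun b hb => h b (by simp [hb]))

lemma list_abs_prod_le {ι : Type*} (L : List ι) (f : ι → ℝ) (M : ℝ) (hM : 0 ≤ M)
    (h : ∀ a ∈ L, |f a| ≤ M) : |(L.map f).prod| ≤ M ^ L.length := by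
  induction L with
  | nil => simp
  | cons a L ih =>
    simp only [List.map_cons, List.prod_cons, List.length_cons, abs_mul, pow_succ']
    exact mul_le_mul (h a (by simp)) (ih fun b hb => h b (by simp [hb])) (abs_nonneg _)
      hM

lemma insk_facts {p : ℕ} (k : Fin p) (T : List (List (Fin p))) :
    (insk p k T).length = T.length ∧
    ∀ T' ∈ insk p k T, T'.length = T.length ∧
      (T'.map List.length).sum = (T.map List.length).sum + 1 ∧
      (∀ κ' ∈ T', κ' ∈ T ∨ ∃ κ'' ∈ T, κ' = k :: κ'') := by
  induction T with
  | nil => simp [insk]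
  | cons κ T ih =>
    constructor
    · simp [insk, ih.1]
    · intro T' hT'
      simp only [insk, List.mem_cons, List.mem_map] at hT'
      rcases hT' with rfl | ⟨T'', hT'', rfl⟩
      · refine ⟨by simp, by simp [List.map_cons]; ring, ?_⟩
        intro κ' hκ'
        rcases List.mem_cons.mp hκ' with rfl | hκ'
        · exact Or.inr ⟨κ, by simp⟩
        · exact Or.inl (by simp [hκ'])
      · obtain ⟨h1, h2, h3⟩ := ih.2 T'' hT''
        refine ⟨by simp [h1], by simp [List.map_cons, h2]; ring, ?_⟩
        intro κ' hκ'
        rcases List.mem_cons.mp hκ' with rfl | hκ'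
        · exact Or.inl (by simp)
        · rcases h3 κ' hκ' with hmem | ⟨κ'', hκ'', rfl⟩
          · exact Or.inl (by simp [hmem])
          · exact Or.inr ⟨κ'', by simp [hκ'']⟩

lemma length_le_sum_lengths {p : ℕ} (T : List (List (Fin p)))
    (h : ∀ κ ∈ T, 1 ≤ κ.length) : T.length ≤ (T.map List.length).sum := by
  induction T with
  | nil => simp
  | cons κ T ih =>
    simp only [List.length_cons, List.map_cons, List.sum_cons]
    have := h κ (by simp)
    have := ih fun κ' hκ' => h κ' (by simp [hκ'])
    omega

lemma sum_map_const_val {ι : Type*} (L : List ι) (f : ι → ℝ) (c : ℝ)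
    (h : ∀ a ∈ L, f a = c) : (L.map f).sum = L.length * c := by
  induction L with
  | nil => simp
  | cons a L ih =>
    simp only [List.map_cons, List.sum_cons, List.length_cons]
    rw [h a (by simp), ih fun b hb => h b (by simp [hb])]
    push_cast; ring

lemma sum_map_flatMap {α β : Type*} (l : List α) (g : α → List β) (f : β → ℝ) :
    ((l.flatMap g).map f).sum = (l.map (fun a => ((g a).map f).sum)).sum := by
  induction l with
  | nil => simp
  | cons a l ih => simp [List.flatMap_cons, ih]

lemma key_lemma (p l : ℕ) (h : (Fin p → ℝ) → ℝ) (hh : ContDiff ℝ (l : ℕ) h) :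
    ∀ ks : List (Fin p), ks.length ≤ l → ∃ terms : List (List (List (Fin p))),
      (∀ x, pcomp p ks (fun y => Real.exp (h y)) x
        = Real.exp (h x) * (terms.map (fun T => (T.map (fun κ => pcomp p κ h x)).prod)).sum)
      ∧ (∀ T ∈ terms, (∀ κ ∈ T, 1 ≤ κ.length) ∧ (T.map List.length).sum = ks.length)
      ∧ ∀ M : ℝ, 0 ≤ M →
          (terms.map (fun T => M ^ T.length)).sum ≤ ((ks.length : ℝ) + M) ^ ks.length := by
  have heh : ContDiff ℝ (l : ℕ) (fun y => Real.exp (h y)) := Real.contDiff_exp.comp hh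
  intro ks
  induction ks with
  | nil =>
    intro _
    refine ⟨[[]], ?_, ?_, ?_⟩
    · intro x; simp [pcomp]
    · intro T hT; simp only [List.mem_singleton] at hT; subst hT; simp
    · intro M hM; simp
  | cons k ks ih =>
    intro hlen
    simp only [List.length_cons] at hlen
    have hlen' : ks.length ≤ l := by omega
    obtain ⟨terms, hF, hstruct, hbd⟩ := ih hlen'
    refine ⟨terms.flatMap (fun T => ([k] :: T) :: insk p k T), ?_, ?_, ?_⟩
    · -- the identity
      intro x
      set e : Fin p → ℝ := Pi.single k 1 with he
      have hGC : ContDiff ℝ (1 : ℕ) (pcomp p ks (fun y => Real.exp (h y))) := by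
        apply contDiff_pcomp
        exact heh.of_le (by exact_mod_cast hlen)
      have hGdiff : DifferentiableAt ℝ (pcomp p ks (fun y => Real.exp (h y))) x :=
        (hGC.differentiable (by norm_num)).differentiableAt
      have hA : HasDerivAt (fun t : ℝ => pcomp p ks (fun y => Real.exp (h y)) (x + t • e))
          (pderiv p k (pcomp p ks (fun y => Real.exp (h y))) x) 0 := hasDerivAt_line hGdiff k
      -- derivative of the explicit formula
      have hexp : HasDerivAt (fun t : ℝ => Real.exp (h (x + t • e)))
          (Real.exp (h x) * pderiv p k h x) 0 := by
        have hhd : DifferentiableAt ℝ h x := by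
          apply (hh.differentiable ?_).differentiableAt
          · exact_mod_cast (show l ≠ 0 by omega)
        have := (hasDerivAt_line hhd k).exp
        simpa using this
      have hfac : ∀ T ∈ terms, ∀ κ ∈ T,
          HasDerivAt (fun t : ℝ => pcomp p κ h (x + t • e)) (pcomp p (k :: κ) h x) 0 := by
        intro T hT κ hκ
        have hκlen : κ.length + 1 ≤ l := by
          have h1 : κ.length ≤ (T.map List.length).sum :=
            List.le_sum_of_mem (List.mem_map_of_mem (f := List.length) hκ)
          have h2 := (hstruct T hT).2
          omega
        have hdiff : DifferentiableAt ℝ (pcomp p κ h) x := by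
          have : ContDiff ℝ (1 : ℕ) (pcomp p κ h) :=
            contDiff_pcomp κ (hh.of_le (by exact_mod_cast hκlen))
          exact (this.differentiable (by norm_num)).differentiableAt
        exact hasDerivAt_line hdiff k
      have hsum : HasDerivAt
          (fun t : ℝ => (terms.map (fun T => (T.map (fun κ => pcomp p κ h (x + t • e))).prod)).sum)
          ((terms.map (fun T =>
            ((insk p k T).map (fun T' => (T'.map (fun κ => pcomp p κ h x)).prod)).sum)).sum) 0 := by
        apply hasDerivAt_list_sum
        intro T hT
        have := hasDerivAt_insk k T (fun κ t => pcomp p κ h (x + t • e)) 0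
          (fun κ hκ => by simpa using hfac T hT κ hκ)
        simpa using this
      have hB := hexp.mul hsum
      have hformula : (fun t : ℝ => pcomp p ks (fun y => Real.exp (h y)) (x + t • e)) =
          (fun t : ℝ => Real.exp (h (x + t • e)) *
            (terms.map (fun T => (T.map (fun κ => pcomp p κ h (x + t • e))).prod)).sum) := by
        funext t; exact hF _
      rw [hformula] at hA
      have hval := hA.unique hB
      have hLHS : pcomp p (k :: ks) (fun y => Real.exp (h y)) x =
          pderiv p k (pcomp p ks (fun y => Real.exp (h y))) x := rfl
      rw [hLHS, hval]
      -- now pure list algebra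
      rw [sum_map_flatMap]
      simp only [List.map_cons, List.sum_cons, List.prod_cons, zero_smul, add_zero]
      rw [List.sum_map_add]
      have h1 : pcomp p [k] h x = pderiv p k h x := rfl
      rw [List.sum_map_mul_left]
      simp only [h1]
      ring
    · -- structure of the new terms
      intro T'' hT''
      simp only [List.mem_flatMap, List.mem_cons] at hT''
      obtain ⟨T, hT, hor⟩ := hT''
      obtain ⟨hfac, hsumlen⟩ := hstruct T hT
      rcases hor with rfl | hins
      · constructor
        · intro κ hκ
          rcases List.mem_cons.mp hκ with rfl | hκ
          · simp
          · exact hfac κ hκ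
        · simp only [List.map_cons, List.sum_cons, List.length_cons, List.length_nil, hsumlen]; omega
      · obtain ⟨_, hsum', hmem⟩ := (insk_facts k T).2 T'' hins
        constructor
        · intro κ' hκ'
          rcases hmem κ' hκ' with hκ' | ⟨κ'', _, rfl⟩
          · exact hfac κ' hκ'
          · simp
        · simp [hsum', hsumlen]
    · -- the numerical bound
      intro M hM
      rw [sum_map_flatMap]
      have hstep : ∀ T ∈ terms,
          ((((([k] :: T) :: insk p k T)).map (fun T' => M ^ T'.length)).sum)
            ≤ ((ks.length : ℝ) + M) * M ^ T.length := by
        intro T hT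
        simp only [List.map_cons, List.sum_cons, List.length_cons]
        have hins : (((insk p k T).map (fun T' => M ^ T'.length)).sum) =
            (T.length : ℝ) * M ^ T.length := by
          rw [sum_map_const_val _ _ (M ^ T.length)
            (fun T' hT' => by rw [((insk_facts k T).2 T' hT').1]), (insk_facts k T).1]
        rw [hins]
        have hTlen : (T.length : ℝ) ≤ (ks.length : ℝ) := by
          have := length_le_sum_lengths T (hstruct T hT).1
          have := (hstruct T hT).2
          exact_mod_cast by omega
        have hMpow : (0:ℝ) ≤ M ^ T.length := pow_nonneg hM _
        calc M ^ (T.length + 1) + (T.length : ℝ) * M ^ T.length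
            = (M + (T.length : ℝ)) * M ^ T.length := by ring
          _ ≤ (M + (ks.length : ℝ)) * M ^ T.length := by
              apply mul_le_mul_of_nonneg_right _ hMpow
              linarith
          _ = ((ks.length : ℝ) + M) * M ^ T.length := by ring
      calc (terms.map fun T => ((([k] :: T) :: insk p k T).map fun T' => M ^ T'.length).sum).sum
          ≤ (terms.map fun T => ((ks.length : ℝ) + M) * M ^ T.length).sum :=
            List.sum_le_sum hstep
        _ = ((ks.length : ℝ) + M) * (terms.map fun T => M ^ T.length).sum := by
            rw [List.sum_map_mul_left]
        _ ≤ ((ks.length : ℝ) + M) * ((ks.length : ℝ) + M) ^ ks.length := by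
            apply mul_le_mul_of_nonneg_left (hbd M hM)
            positivity
        _ = ((ks.length : ℝ) + M) ^ (ks.length + 1) := by rw [pow_succ]; ring
        _ ≤ (((k :: ks).length : ℝ) + M) ^ (ks.length + 1) := by
            apply pow_le_pow_left₀ (by positivity)
            simp only [List.length_cons]
            push_cast; linarith
        _ = (((k :: ks).length : ℝ) + M) ^ (k :: ks).length := by
            simp [List.length_cons]

/-- Let `p ≥ 1`, `l ≥ 1`, `h : ℝ^p → ℝ` be `l`-times continuously
differentiable and `ε ∈ ℝ^p`.  If `M ≥ 0` bounds `|h^{(μ)}|` for all multi-indices `μ`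
with `1 ≤ |μ| ≤ l`, at all points in a neighborhood of `ε`, then for every multi-index
`ν` with `|ν| = l`, `|(e^h)^{(ν)}(ε)| ≤ (l + M)^l · e^{h(ε)}`. -/
theorem stmt4 (p l : ℕ) (hp : 1 ≤ p) (hl : 1 ≤ l)
    (h : (Fin p → ℝ) → ℝ) (hh : ContDiff ℝ l h)
    (ε : Fin p → ℝ) (M : ℝ) (hM : 0 ≤ M)
    (hbound : ∀ᶠ ε' in nhds ε, ∀ μ : Fin p → ℕ,
      1 ≤ ∑ k, μ k → ∑ k, μ k ≤ l → |mderiv p μ h ε'| ≤ M) :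
    ∀ ν : Fin p → ℕ, ∑ k, ν k = l →
      |mderiv p ν (fun x => Real.exp (h x)) ε| ≤ ((l : ℝ) + M) ^ l * Real.exp (h ε) := by
  intro ν hν
  have hlen_gen : ∀ μ : Fin p → ℕ,
      ((List.finRange p).flatMap fun k => List.replicate (μ k) k).length = ∑ k, μ k := by
    intro μ
    rw [List.length_flatMap]
    rw [Fin.sum_univ_def]
    congr 1
    simp [Function.comp_def]
  have hcount_gen : ∀ (μ : Fin p → ℕ) (a : Fin p),
      ((List.finRange p).flatMap fun k => List.replicate (μ k) k).count a = μ a := by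
    intro μ a
    rw [List.count_flatMap]
    have : ((List.finRange p).map (List.count a ∘ fun k => List.replicate (μ k) k)) =
        (List.finRange p).map (fun k => if k = a then μ a else 0) := by
      apply List.map_congr_left
      intro k _
      simp only [Function.comp_apply, List.count_replicate]
      by_cases hk : k = a <;> simp [hk]
    rw [this, ← Fin.sum_univ_def]
    simp
  set ks : List (Fin p) := (List.finRange p).flatMap fun k => List.replicate (ν k) k with hks
  have hkslen : ks.length = l := by rw [hks, hlen_gen, hν]
  obtain ⟨terms, hF, hstruct, hbd⟩ := key_lemma p l h hh ks (le_of_eq hkslen)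
  rw [mderiv_eq_pcomp, ← hks, hF ε]
  -- bound each factor at ε
  have hfactor : ∀ T ∈ terms, ∀ κ ∈ T, |pcomp p κ h ε| ≤ M := by
    intro T hT κ hκ
    obtain ⟨hfac, hsumlen⟩ := hstruct T hT
    have hκlen : κ.length ≤ l := by
      have := List.le_sum_of_mem (List.mem_map_of_mem (f := List.length) hκ)
      omega
    have hκpos : 1 ≤ κ.length := hfac κ hκ
    set μ : Fin p → ℕ := fun k => κ.count k with hμ
    set ksμ : List (Fin p) := (List.finRange p).flatMap fun k => List.replicate (μ k) k
      with hksμ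
    have hperm : κ.Perm ksμ := by
      rw [List.perm_iff_count]
      intro a
      rw [hksμ, hcount_gen μ a]
    have hμsum : ∑ k, μ k = κ.length := by
      rw [← hlen_gen μ, ← hksμ, hperm.length_eq]
    have heq : pcomp p κ h = mderiv p μ h := by
      rw [mderiv_eq_pcomp, ← hksμ]
      exact pcomp_perm hh hperm hκlen
    rw [heq]
    exact hbound.self_of_nhds μ (by omega) (by omega)
  have habs : |(terms.map (fun T => (T.map (fun κ => pcomp p κ h ε)).prod)).sum|
      ≤ (terms.map (fun T => M ^ T.length)).sum := by
    apply list_abs_sum_le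
    intro T hT
    exact list_abs_prod_le T _ M hM (fun κ hκ => hfactor T hT κ hκ)
  have hbd' := hbd M hM
  rw [hkslen] at hbd'
  calc |Real.exp (h ε) * (terms.map (fun T => (T.map (fun κ => pcomp p κ h ε)).prod)).sum|
      = Real.exp (h ε) * |(terms.map (fun T => (T.map (fun κ => pcomp p κ h ε)).prod)).sum| := by
        rw [abs_mul, abs_of_pos (Real.exp_pos _)]
    _ ≤ Real.exp (h ε) * (terms.map (fun T => M ^ T.length)).sum :=
        mul_le_mul_of_nonneg_left habs (Real.exp_pos _).le
    _ ≤ Real.exp (h ε) * ((l : ℝ) + M) ^ l :=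
        mul_le_mul_of_nonneg_left hbd' (Real.exp_pos _).le
    _ = ((l : ℝ) + M) ^ l * Real.exp (h ε) := by ring
end

section
/- Let (M_t)_{t∈ℤ} be independent, identically distributed nonnegative real random variables on a probability space, let q ≥ 1 be an integer, and suppose there is a constant c > 2 such that P(M_0 ≥ u) = O((log u)^{-c}) as u → ∞. Then almost surely, for every β > 1, β^{-n} · n · max_{|t| ≤ n} (q + M_t)^q → 0 as n → ∞. -/
open MeasureTheory ProbabilityTheory Filter

/-- Let `(M t)_{t ∈ ℤ}` be i.i.d. nonnegative real random variables,
`q ≥ 1` an integer, and suppose there is a constant `c > 2` with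
`P(M 0 ≥ u) = O((log u)^{-c})` as `u → ∞`.  Then almost surely, for every `β > 1`,
`β^{-n} · n · max_{|t| ≤ n} (q + M t)^q → 0` as `n → ∞`. -/
theorem stmt5 {Ω : Type*} [MeasurableSpace Ω] (μ : Measure Ω) [IsProbabilityMeasure μ]
    (M : ℤ → Ω → ℝ) (hmeas : ∀ t, Measurable (M t))
    (hnonneg : ∀ t ω, 0 ≤ M t ω)
    (hindep : iIndepFun M μ)
    (hident : ∀ t, IdentDistrib (M t) (M 0) μ μ)
    (q : ℕ) (hq : 1 ≤ q) (c : ℝ) (hc : 2 < c)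
    (htail : ∃ C u₀ : ℝ, ∀ u ≥ u₀,
      (μ {ω | u ≤ M 0 ω}).toReal ≤ C * Real.log u ^ (-c)) :
    ∀ᵐ ω ∂μ, ∀ β : ℝ, 1 < β →
      Tendsto (fun n : ℕ => (β ^ n)⁻¹ * ((n : ℝ) *
          (Finset.Icc (-(n : ℤ)) (n : ℤ)).sup'
            ⟨0, Finset.mem_Icc.mpr (by omega)⟩ fun t => ((q : ℝ) + M t ω) ^ q))
        atTop (nhds 0) := by
  obtain ⟨C, u₀, hC⟩ := htail
  -- Step 1: Borel–Cantelli for each k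
  have key : ∀ k : ℕ, ∀ᵐ ω ∂μ, ∀ᶠ n : ℕ in atTop,
      M (n : ℤ) ω < Real.exp (((k : ℝ) + 1)⁻¹ * n) ∧
      M (-(n : ℤ)) ω < Real.exp (((k : ℝ) + 1)⁻¹ * n) := by
    intro k
    set ε : ℝ := ((k : ℝ) + 1)⁻¹ with hε
    have hεpos : 0 < ε := by positivity
    set s : ℕ → Set Ω := fun n =>
      {ω | Real.exp (ε * n) ≤ M (n : ℤ) ω} ∪ {ω | Real.exp (ε * n) ≤ M (-(n : ℤ)) ω} with hs
    have hmeq : ∀ (t : ℤ) (u : ℝ), μ {ω | u ≤ M t ω} = μ {ω | u ≤ M 0 ω} := by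
      intro t u
      exact (hident t).measure_mem_eq measurableSet_Ici
    -- real tail bound
    have hbound : ∀ᶠ n : ℕ in atTop,
        (μ (s n)).toReal ≤ 2 * C * (ε ^ (-c) * (n : ℝ) ^ (-c)) := by
      have h1 : Tendsto (fun n : ℕ => Real.exp (ε * n)) atTop atTop := by
        exact Real.tendsto_exp_atTop.comp
          ((tendsto_natCast_atTop_atTop (R := ℝ)).const_mul_atTop hεpos)
      filter_upwards [h1.eventually_ge_atTop u₀, eventually_ge_atTop 1] with n hn hn1
      have hnpos : (0 : ℝ) < n := by exact_mod_cast hn1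
      have htails : (μ {ω | Real.exp (ε * n) ≤ M 0 ω}).toReal ≤ C * (ε * n) ^ (-c) := by
        have := hC _ hn
        rwa [Real.log_exp] at this
      have hsub : μ (s n) ≤ 2 * μ {ω | Real.exp (ε * n) ≤ M 0 ω} := by
        calc μ (s n) ≤ μ {ω | Real.exp (ε * n) ≤ M (n : ℤ) ω}
            + μ {ω | Real.exp (ε * n) ≤ M (-(n : ℤ)) ω} := measure_union_le _ _
          _ = 2 * μ {ω | Real.exp (ε * n) ≤ M 0 ω} := by
              rw [hmeq ((n : ℤ)), hmeq (-(n : ℤ)), two_mul]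
      have hfin : 2 * μ {ω | Real.exp (ε * n) ≤ M 0 ω} ≠ ⊤ := by
        refine ENNReal.mul_ne_top (by norm_num) (measure_ne_top μ _)
      calc (μ (s n)).toReal ≤ (2 * μ {ω | Real.exp (ε * n) ≤ M 0 ω}).toReal :=
            ENNReal.toReal_mono hfin hsub
        _ = 2 * (μ {ω | Real.exp (ε * n) ≤ M 0 ω}).toReal := by
            rw [ENNReal.toReal_mul]; norm_num
        _ ≤ 2 * (C * (ε * n) ^ (-c)) := by linarith [htails]
        _ = 2 * C * (ε ^ (-c) * (n : ℝ) ^ (-c)) := by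
            rw [Real.mul_rpow hεpos.le hnpos.le]; ring
    have hsummable : Summable (fun n : ℕ => (μ (s n)).toReal) := by
      have hsum2 : Summable (fun n : ℕ => (n : ℝ) ^ (-c)) := by
        rw [Real.summable_nat_rpow]; linarith
      refine summable_of_isBigO_nat hsum2 ?_
      rw [Asymptotics.isBigO_iff]
      refine ⟨|2 * C * ε ^ (-c)|, ?_⟩
      filter_upwards [hbound] with n hn
      have h0 : 0 ≤ (μ (s n)).toReal := ENNReal.toReal_nonneg
      have h1 : 0 ≤ (n : ℝ) ^ (-c) := Real.rpow_nonneg (Nat.cast_nonneg n) _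
      rw [Real.norm_eq_abs, Real.norm_eq_abs, abs_of_nonneg h0, abs_of_nonneg h1]
      calc (μ (s n)).toReal ≤ 2 * C * ε ^ (-c) * (n : ℝ) ^ (-c) := by linarith [hn]
        _ ≤ |2 * C * ε ^ (-c)| * (n : ℝ) ^ (-c) := by
            exact mul_le_mul_of_nonneg_right (le_abs_self _) h1
    have htsum : (∑' n, μ (s n)) ≠ ⊤ := by
      have : (∑' n, μ (s n)) = ENNReal.ofReal (∑' n, (μ (s n)).toReal) := by
        rw [ENNReal.ofReal_tsum_of_nonneg (fun n => ENNReal.toReal_nonneg) hsummable]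
        congr 1
        ext n
        rw [ENNReal.ofReal_toReal (measure_ne_top μ _)]
      rw [this]
      exact ENNReal.ofReal_ne_top
    filter_upwards [ae_eventually_notMem htsum] with ω hω
    filter_upwards [hω] with n hn
    rw [hs] at hn
    simp only [Set.mem_union, Set.mem_setOf_eq, not_or, not_le] at hn
    exact hn
  rw [← ae_all_iff] at key
  -- Step 2: deterministic part
  filter_upwards [key] with ω hω β hβ
  have hlogβ : 0 < Real.log β := Real.log_pos hβ
  obtain ⟨k, hk⟩ := exists_nat_gt ((q : ℝ) / Real.log β)
  set ε : ℝ := ((k : ℝ) + 1)⁻¹ with hεdef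
  have hεpos : 0 < ε := by positivity
  have hqε : (q : ℝ) * ε < Real.log β := by
    have h2 : (q : ℝ) < (k : ℝ) * Real.log β := (div_lt_iff₀ hlogβ).mp hk
    rw [hεdef, mul_inv_lt_iff₀ (by positivity)]
    nlinarith
  set r : ℝ := Real.exp ((q : ℝ) * ε) / β with hrdef
  have hβpos : (0 : ℝ) < β := lt_trans one_pos hβ
  have hr0 : 0 ≤ r := by positivity
  have hr1 : r < 1 := by
    rw [hrdef, div_lt_one hβpos]
    calc Real.exp ((q : ℝ) * ε) < Real.exp (Real.log β) := Real.exp_lt_exp.mpr hqε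
      _ = β := Real.exp_log hβpos
  obtain ⟨N, hN⟩ := (hω k).exists_forall_of_atTop
  set K : ℝ := (Finset.Icc (-(N : ℤ)) (N : ℤ)).sup'
      ⟨0, Finset.mem_Icc.mpr (by omega)⟩ (fun t => M t ω) with hKdef
  have hK0 : 0 ≤ K := by
    refine le_trans (hnonneg 0 ω) ?_
    exact Finset.le_sup' (fun t => M t ω)
      (Finset.mem_Icc.mpr (by omega) : (0:ℤ) ∈ Finset.Icc (-(N : ℤ)) (N : ℤ))
  -- bound on M t ω for |t| ≤ n, n ≥ N
  have hMbound : ∀ n : ℕ, N ≤ n → ∀ t ∈ Finset.Icc (-(n : ℤ)) (n : ℤ),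
      M t ω ≤ K + Real.exp (ε * n) := by
    intro n hn t ht
    rw [Finset.mem_Icc] at ht
    by_cases hcase : t.natAbs ≤ N
    · have h1 : M t ω ≤ K := by
        refine Finset.le_sup' (fun t => M t ω) (Finset.mem_Icc.mpr ?_)
        omega
      linarith [Real.exp_pos (ε * n)]
    · push_neg at hcase
      have hm : N ≤ t.natAbs := hcase.le
      have hmn : (t.natAbs : ℝ) ≤ n := by
        have : t.natAbs ≤ n := by omega
        exact_mod_cast this
      have hexp : Real.exp (ε * t.natAbs) ≤ Real.exp (ε * n) := by
        apply Real.exp_le_exp.mpr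
        exact mul_le_mul_of_nonneg_left hmn hεpos.le
      have hN' := hN t.natAbs hm
      have h2 : M t ω < Real.exp (ε * t.natAbs) := by
        rcases Int.natAbs_eq t with h | h
        · rw [show M t ω = M ((t.natAbs : ℕ) : ℤ) ω from by rw [← h]]
          exact hN'.1
        · rw [show M t ω = M (-((t.natAbs : ℕ) : ℤ)) ω from by rw [← h]]
          exact hN'.2
      linarith
  -- squeeze
  have hsq : ∀ᶠ n : ℕ in atTop,
      (β ^ n)⁻¹ * ((n : ℝ) * (Finset.Icc (-(n : ℤ)) (n : ℤ)).sup'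
        ⟨0, Finset.mem_Icc.mpr (by omega)⟩ (fun t => ((q : ℝ) + M t ω) ^ q))
      ≤ ((q : ℝ) + K + 1) ^ q * ((n : ℝ) * r ^ n) := by
    filter_upwards [eventually_ge_atTop N] with n hn
    have hsup : (Finset.Icc (-(n : ℤ)) (n : ℤ)).sup'
        ⟨0, Finset.mem_Icc.mpr (by omega)⟩ (fun t => ((q : ℝ) + M t ω) ^ q)
        ≤ ((q : ℝ) + K + Real.exp (ε * n)) ^ q := by
      refine Finset.sup'_le _ _ fun t ht => ?_
      refine pow_le_pow_left₀ (add_nonneg (Nat.cast_nonneg q) (hnonneg t ω)) ?_ q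
      have := hMbound n hn t ht
      linarith
    have hexp1 : (1 : ℝ) ≤ Real.exp (ε * n) := by
      rw [Real.one_le_exp_iff]; positivity
    have hstep : ((q : ℝ) + K + Real.exp (ε * n)) ^ q
        ≤ (((q : ℝ) + K + 1) * Real.exp (ε * n)) ^ q := by
      have hq1 : (1 : ℝ) ≤ (q : ℕ) := by exact_mod_cast hq
      refine pow_le_pow_left₀ (by positivity) ?_ q
      nlinarith [hK0, hexp1, hq1]
    have hexpq : Real.exp (ε * n) ^ q = Real.exp ((q : ℝ) * ε) ^ n := by
      rw [← Real.exp_nat_mul, ← Real.exp_nat_mul]; ring_nf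
    have hβn : (0 : ℝ) < β ^ n := by positivity
    calc (β ^ n)⁻¹ * ((n : ℝ) * (Finset.Icc (-(n : ℤ)) (n : ℤ)).sup'
          ⟨0, Finset.mem_Icc.mpr (by omega)⟩ (fun t => ((q : ℝ) + M t ω) ^ q))
        ≤ (β ^ n)⁻¹ * ((n : ℝ) * (((q : ℝ) + K + 1) * Real.exp (ε * n)) ^ q) := by
          refine mul_le_mul_of_nonneg_left ?_ (by positivity)
          exact mul_le_mul_of_nonneg_left (le_trans hsup hstep) (Nat.cast_nonneg n)
      _ = ((q : ℝ) + K + 1) ^ q * ((n : ℝ) * r ^ n) := by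
          rw [mul_pow, hexpq, hrdef, div_pow]
          field_simp
  have hnonneg' : ∀ n : ℕ, 0 ≤ (β ^ n)⁻¹ * ((n : ℝ) * (Finset.Icc (-(n : ℤ)) (n : ℤ)).sup'
      ⟨0, Finset.mem_Icc.mpr (by omega)⟩ (fun t => ((q : ℝ) + M t ω) ^ q)) := by
    intro n
    have hs : (0:ℝ) ≤ (Finset.Icc (-(n : ℤ)) (n : ℤ)).sup'
        ⟨0, Finset.mem_Icc.mpr (by omega)⟩ (fun t => ((q : ℝ) + M t ω) ^ q) := by
      refine le_trans ?_ (Finset.le_sup' _ (Finset.mem_Icc.mpr (by omega) :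
        (0:ℤ) ∈ Finset.Icc (-(n : ℤ)) (n : ℤ)))
      exact pow_nonneg (add_nonneg (Nat.cast_nonneg q) (hnonneg 0 ω)) q
    have hβn : (0:ℝ) ≤ (β ^ n)⁻¹ := by positivity
    exact mul_nonneg hβn (mul_nonneg (Nat.cast_nonneg n) hs)
  have hlim : Tendsto (fun n : ℕ => ((q : ℝ) + K + 1) ^ q * ((n : ℝ) * r ^ n))
      atTop (nhds 0) := by
    have := tendsto_self_mul_const_pow_of_lt_one hr0 hr1
    simpa using this.const_mul (((q : ℝ) + K + 1) ^ q)
  exact squeeze_zero' (Eventually.of_forall hnonneg') hsq hlim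
end

section
/- Let H be a finite nonempty set, let L : H × H → ℝ and M : H × H → ℝ have strictly positive entries, let ψ : H → (0,∞), and define L' by L'(a,b) = ψ(b) · Σ_{e∈H} L(a,e) M(e,b). Set γ(M) = 1 − (min_{c,d,e∈H} M(e,d)/M(e,c)) / (max_{c,d,e∈H} M(e,d)/M(e,c)); then γ(M) ∈ [0,1] and Δ(L') ≤ γ(M) · Δ(L); in particular Δ(L') ≤ Δ(L). -/
/-- For a matrix `K : H × H → ℝ` with positive entries,
`Delta K = max_{a,b,c,d} |K b c / K a c − K b d / K a d|`. -/
noncomputable def Delta {H : Type*} [Fintype H] [Nonempty H] (K : H → H → ℝ) : ℝ :=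
  Finset.univ.sup' Finset.univ_nonempty fun x : (H × H) × H × H =>
    |K x.1.2 x.2.1 / K x.1.1 x.2.1 - K x.1.2 x.2.2 / K x.1.1 x.2.2|

/-- `gammaM M = 1 − (min_{c,d,e} M e d / M e c) / (max_{c,d,e} M e d / M e c)`. -/
noncomputable def gammaM {H : Type*} [Fintype H] [Nonempty H] (M : H → H → ℝ) : ℝ :=
  1 - (Finset.univ.inf' Finset.univ_nonempty fun x : (H × H) × H =>
        M x.2 x.1.2 / M x.2 x.1.1) /
      (Finset.univ.sup' Finset.univ_nonempty fun x : (H × H) × H =>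
        M x.2 x.1.2 / M x.2 x.1.1)

lemma avg_lemma {H : Type*} [Fintype H] (p q ρ : H → ℝ) (θ mρ Mρ : ℝ)
    (hq : ∀ e, 0 ≤ q e)
    (hps : ∑ e, p e = 1) (hqs : ∑ e, q e = 1)
    (hθq : ∀ e, θ * q e ≤ p e)
    (hm : ∀ e, mρ ≤ ρ e) (hMr : ∀ e, ρ e ≤ Mρ) :
    ∑ e, p e * ρ e - ∑ e, q e * ρ e ≤ (1 - θ) * (Mρ - mρ) := by
  have hθ1 : θ ≤ 1 := by
    have h : ∑ e, θ * q e ≤ ∑ e, p e := Finset.sum_le_sum fun e _ => hθq e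
    rwa [← Finset.mul_sum, hqs, mul_one, hps] at h
  have h1 : ∑ e, (p e - θ * q e) * ρ e ≤ (1 - θ) * Mρ := by
    calc ∑ e, (p e - θ * q e) * ρ e ≤ ∑ e, (p e - θ * q e) * Mρ :=
          Finset.sum_le_sum fun e _ =>
            mul_le_mul_of_nonneg_left (hMr e) (by linarith [hθq e])
      _ = (1 - θ) * Mρ := by
          rw [← Finset.sum_mul, Finset.sum_sub_distrib, hps, ← Finset.mul_sum, hqs, mul_one]
  have h3 : ∑ e, (p e - θ * q e) * ρ e = ∑ e, p e * ρ e - θ * ∑ e, q e * ρ e := by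
    rw [Finset.mul_sum, ← Finset.sum_sub_distrib]
    exact Finset.sum_congr rfl fun e _ => by ring
  rw [h3] at h1
  have h2 : (1 - θ) * mρ ≤ (1 - θ) * ∑ e, q e * ρ e := by
    apply mul_le_mul_of_nonneg_left _ (by linarith)
    calc mρ = ∑ e, q e * mρ := by rw [← Finset.sum_mul, hqs, one_mul]
      _ ≤ ∑ e, q e * ρ e := Finset.sum_le_sum fun e _ =>
          mul_le_mul_of_nonneg_left (hm e) (hq e)
  nlinarith

lemma key_bound {H : Type*} [Fintype H] [Nonempty H]
    (L M : H → H → ℝ) (hL : ∀ a b, 0 < L a b) (hM : ∀ a b, 0 < M a b)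
    (a b c d : H) :
    |(∑ e, L b e * M e c) / (∑ e, L a e * M e c) -
      (∑ e, L b e * M e d) / (∑ e, L a e * M e d)| ≤ gammaM M * Delta L := by
  set ms : ℝ := Finset.univ.inf' Finset.univ_nonempty
      (fun x : (H × H) × H => M x.2 x.1.2 / M x.2 x.1.1) with hms
  set Ms : ℝ := Finset.univ.sup' Finset.univ_nonempty
      (fun x : (H × H) × H => M x.2 x.1.2 / M x.2 x.1.1) with hMs
  -- positivity of mins/maxes
  have hmspos : 0 < ms := by
    obtain ⟨x, _, hx⟩ := Finset.exists_mem_eq_inf' Finset.univ_nonempty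
      (fun x : (H × H) × H => M x.2 x.1.2 / M x.2 x.1.1)
    rw [hms, hx]; exact div_pos (hM _ _) (hM _ _)
  have hMspos : 0 < Ms := by
    obtain ⟨x, _, hx⟩ := Finset.exists_mem_eq_sup' Finset.univ_nonempty
      (fun x : (H × H) × H => M x.2 x.1.2 / M x.2 x.1.1)
    rw [hMs, hx]; exact div_pos (hM _ _) (hM _ _)
  set θ := ms / Ms with hθdef
  -- ratio bounds: for all y z e, M e z ≥ ms * M e y  and  M e z ≤ Ms * M e y
  have hlow : ∀ (y z e : H), ms * M e y ≤ M e z := by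
    intro y z e
    have h := Finset.inf'_le (s := (Finset.univ : Finset ((H × H) × H)))
      (fun x : (H × H) × H => M x.2 x.1.2 / M x.2 x.1.1) (Finset.mem_univ ((y, z), e))
    rw [← hms] at h
    simp only at h
    rw [le_div_iff₀ (hM e y)] at h
    linarith
  have hhigh : ∀ (y z e : H), M e z ≤ Ms * M e y := by
    intro y z e
    have h := Finset.le_sup' (s := (Finset.univ : Finset ((H × H) × H)))
      (fun x : (H × H) × H => M x.2 x.1.2 / M x.2 x.1.1) (Finset.mem_univ ((y, z), e))
    rw [← hMs] at h
    simp only at h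
    rw [div_le_iff₀ (hM e y)] at h
    linarith
  -- sums
  set Zc : ℝ := ∑ e, L a e * M e c with hZc
  set Zd : ℝ := ∑ e, L a e * M e d with hZd
  have hZcpos : 0 < Zc := Finset.sum_pos (fun e _ => mul_pos (hL a e) (hM e c))
    Finset.univ_nonempty
  have hZdpos : 0 < Zd := Finset.sum_pos (fun e _ => mul_pos (hL a e) (hM e d))
    Finset.univ_nonempty
  set p : H → ℝ := fun e => L a e * M e c / Zc with hp
  set q : H → ℝ := fun e => L a e * M e d / Zd with hqdef
  set ρ : H → ℝ := fun e => L b e / L a e with hρ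
  have hpnn : ∀ e, 0 ≤ p e := fun e =>
    div_nonneg (mul_pos (hL a e) (hM e c)).le hZcpos.le
  have hqnn : ∀ e, 0 ≤ q e := fun e =>
    div_nonneg (mul_pos (hL a e) (hM e d)).le hZdpos.le
  have hps : ∑ e, p e = 1 := by
    rw [hp]; simp only; rw [← Finset.sum_div, ← hZc, div_self hZcpos.ne']
  have hqs : ∑ e, q e = 1 := by
    rw [hqdef]; simp only; rw [← Finset.sum_div, ← hZd, div_self hZdpos.ne']
  have hsump : ∑ e, p e * ρ e = (∑ e, L b e * M e c) / Zc := by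
    rw [Finset.sum_div]
    refine Finset.sum_congr rfl fun e _ => ?_
    have h1 : (L a e) ≠ 0 := (hL a e).ne'
    have h2 : Zc ≠ 0 := hZcpos.ne'
    rw [hp, hρ]
    field_simp
    all_goals ring
  have hsumq : ∑ e, q e * ρ e = (∑ e, L b e * M e d) / Zd := by
    rw [Finset.sum_div]
    refine Finset.sum_congr rfl fun e _ => ?_
    have h1 : (L a e) ≠ 0 := (hL a e).ne'
    have h2 : Zd ≠ 0 := hZdpos.ne'
    rw [hqdef, hρ]
    field_simp
    all_goals ring
  -- θ-domination both ways
  have hdom : ∀ (y z : H) (Zy Zz : ℝ), 0 < Zy → 0 < Zz →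
      (∀ e, L a e * M e y = (fun e => L a e * M e y) e) → True := fun _ _ _ _ _ _ _ => trivial
  have hθpq : ∀ e, θ * q e ≤ p e := by
    intro e
    have h1 : ms * (L a e * M e d) ≤ L a e * M e c := by
      have := hlow d c e
      nlinarith [(hL a e).le]
    have h2 : Zc ≤ Ms * Zd := by
      rw [hZc, hZd, Finset.mul_sum]
      refine Finset.sum_le_sum fun e _ => ?_
      have := hhigh d c e
      nlinarith [(hL a e).le]
    have : θ * q e = ms * (L a e * M e d) / (Ms * Zd) := by
      rw [hθdef, hqdef]; field_simp
    rw [this, hp]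
    exact div_le_div₀ (mul_pos (hL a e) (hM e c)).le h1 hZcpos h2
  have hθqp : ∀ e, θ * p e ≤ q e := by
    intro e
    have h1 : ms * (L a e * M e c) ≤ L a e * M e d := by
      have := hlow c d e
      nlinarith [(hL a e).le]
    have h2 : Zd ≤ Ms * Zc := by
      rw [hZc, hZd, Finset.mul_sum]
      refine Finset.sum_le_sum fun e _ => ?_
      have := hhigh c d e
      nlinarith [(hL a e).le]
    have : θ * p e = ms * (L a e * M e c) / (Ms * Zc) := by
      rw [hθdef, hp]; field_simp
    rw [this, hqdef]
    exact div_le_div₀ (mul_pos (hL a e) (hM e d)).le h1 hZdpos h2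
  -- range of ρ
  set mρ : ℝ := Finset.univ.inf' Finset.univ_nonempty ρ with hmρ
  set Mρ : ℝ := Finset.univ.sup' Finset.univ_nonempty ρ with hMρ
  have hm : ∀ e, mρ ≤ ρ e := fun e => Finset.inf'_le ρ (Finset.mem_univ e)
  have hMr : ∀ e, ρ e ≤ Mρ := fun e => Finset.le_sup' ρ (Finset.mem_univ e)
  have hrange : Mρ - mρ ≤ Delta L := by
    obtain ⟨e1, _, he1⟩ := Finset.exists_mem_eq_sup' Finset.univ_nonempty ρ
    obtain ⟨e2, _, he2⟩ := Finset.exists_mem_eq_inf' Finset.univ_nonempty ρ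
    have h := Finset.le_sup' (s := (Finset.univ : Finset ((H × H) × H × H)))
      (fun x : (H × H) × H × H =>
        |L x.1.2 x.2.1 / L x.1.1 x.2.1 - L x.1.2 x.2.2 / L x.1.1 x.2.2|)
      (Finset.mem_univ ((a, b), e1, e2))
    simp only at h
    rw [hMρ, he1, hmρ, he2, Delta]
    calc ρ e1 - ρ e2 ≤ |ρ e1 - ρ e2| := le_abs_self _
      _ = |L b e1 / L a e1 - L b e2 / L a e2| := by rw [hρ]
      _ ≤ _ := h
  -- main bound
  have hA := avg_lemma p q ρ θ mρ Mρ hqnn hps hqs hθpq hm hMr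
  have hB := avg_lemma q p ρ θ mρ Mρ hpnn hqs hps hθqp hm hMr
  rw [hsump, hsumq] at hA hB
  have hγ : gammaM M = 1 - θ := by rw [gammaM, hθdef, ← hms, ← hMs]
  have hγnn : 0 ≤ 1 - θ := by
    have : θ ≤ 1 := by
      rw [hθdef, div_le_one hMspos]
      have h1 := Finset.inf'_le (s := (Finset.univ : Finset ((H × H) × H)))
        (fun x : (H × H) × H => M x.2 x.1.2 / M x.2 x.1.1)
        (Finset.mem_univ (Classical.arbitrary _))
      have h2 := Finset.le_sup' (s := (Finset.univ : Finset ((H × H) × H)))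
        (fun x : (H × H) × H => M x.2 x.1.2 / M x.2 x.1.1)
        (Finset.mem_univ (Classical.arbitrary _))
      rw [hms, hMs]
      exact le_trans h1 h2
    linarith
  rw [hγ, abs_sub_le_iff]
  constructor
  · exact le_trans hA (mul_le_mul_of_nonneg_left hrange hγnn)
  · exact le_trans hB (mul_le_mul_of_nonneg_left hrange hγnn)

/-- Let `H` be finite nonempty, `L`, `M : H × H → ℝ` with strictly
positive entries, `ψ : H → (0,∞)`, and `L' a b = ψ b · ∑_e L a e · M e b`.  Then
`γ(M) ∈ [0,1]`, `Δ(L') ≤ γ(M) · Δ(L)`, and in particular `Δ(L') ≤ Δ(L)`. -/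
theorem stmt6 {H : Type*} [Fintype H] [Nonempty H]
    (L M : H → H → ℝ) (hL : ∀ a b, 0 < L a b) (hM : ∀ a b, 0 < M a b)
    (ψ : H → ℝ) (hψ : ∀ b, 0 < ψ b) :
    0 ≤ gammaM M ∧ gammaM M ≤ 1 ∧
      Delta (fun a b => ψ b * ∑ e, L a e * M e b) ≤ gammaM M * Delta L ∧
      Delta (fun a b => ψ b * ∑ e, L a e * M e b) ≤ Delta L := by
  have hDnn : 0 ≤ Delta L := by
    have a0 := Classical.arbitrary H
    exact le_trans (abs_nonneg _) (Finset.le_sup'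
      (fun x : (H × H) × H × H =>
        |L x.1.2 x.2.1 / L x.1.1 x.2.1 - L x.1.2 x.2.2 / L x.1.1 x.2.2|)
      (Finset.mem_univ ((a0, a0), a0, a0)))
  have hmspos : 0 < Finset.univ.inf' Finset.univ_nonempty
      (fun x : (H × H) × H => M x.2 x.1.2 / M x.2 x.1.1) := by
    obtain ⟨x, _, hx⟩ := Finset.exists_mem_eq_inf' Finset.univ_nonempty
      (fun x : (H × H) × H => M x.2 x.1.2 / M x.2 x.1.1)
    rw [hx]; exact div_pos (hM _ _) (hM _ _)
  have hMspos : 0 < Finset.univ.sup' Finset.univ_nonempty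
      (fun x : (H × H) × H => M x.2 x.1.2 / M x.2 x.1.1) := by
    obtain ⟨x, _, hx⟩ := Finset.exists_mem_eq_sup' Finset.univ_nonempty
      (fun x : (H × H) × H => M x.2 x.1.2 / M x.2 x.1.1)
    rw [hx]; exact div_pos (hM _ _) (hM _ _)
  have hmsMs : Finset.univ.inf' Finset.univ_nonempty
      (fun x : (H × H) × H => M x.2 x.1.2 / M x.2 x.1.1) ≤
      Finset.univ.sup' Finset.univ_nonempty
      (fun x : (H × H) × H => M x.2 x.1.2 / M x.2 x.1.1) := by
    have h1 := Finset.inf'_le (s := (Finset.univ : Finset ((H × H) × H)))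
      (fun x : (H × H) × H => M x.2 x.1.2 / M x.2 x.1.1)
      (Finset.mem_univ (Classical.arbitrary _))
    have h2 := Finset.le_sup' (s := (Finset.univ : Finset ((H × H) × H)))
      (fun x : (H × H) × H => M x.2 x.1.2 / M x.2 x.1.1)
      (Finset.mem_univ (Classical.arbitrary _))
    exact le_trans h1 h2
  have hγ0 : 0 ≤ gammaM M := by
    rw [gammaM, sub_nonneg, div_le_one hMspos]
    exact hmsMs
  have hγ1 : gammaM M ≤ 1 := by
    rw [gammaM]
    have : 0 ≤ (Finset.univ.inf' Finset.univ_nonempty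
        (fun x : (H × H) × H => M x.2 x.1.2 / M x.2 x.1.1)) /
        (Finset.univ.sup' Finset.univ_nonempty
        (fun x : (H × H) × H => M x.2 x.1.2 / M x.2 x.1.1)) :=
      div_nonneg hmspos.le hMspos.le
    linarith
  have hmain : Delta (fun a b => ψ b * ∑ e, L a e * M e b) ≤ gammaM M * Delta L := by
    rw [Delta]
    apply Finset.sup'_le
    intro x _
    have hc : ψ x.2.1 ≠ 0 := (hψ x.2.1).ne'
    have hd : ψ x.2.2 ≠ 0 := (hψ x.2.2).ne'
    rw [mul_div_mul_left _ _ hc, mul_div_mul_left _ _ hd]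
    exact key_bound L M hL hM x.1.1 x.1.2 x.2.1 x.2.2
  refine ⟨hγ0, hγ1, hmain, le_trans hmain ?_⟩
  calc gammaM M * Delta L ≤ 1 * Delta L := mul_le_mul_of_nonneg_right hγ1 hDnn
    _ = Delta L := one_mul _
end

section
/- Let H be a finite nonempty set with a distinguished element ι, let L : H × H → ℝ and M : H × H → ℝ have strictly positive entries, let ψ : H → (0,∞), and define L' by L'(a,b) = ψ(b) · Σ_{e∈H} L(a,e) M(e,b). For a matrix K with positive entries define λ_a(K) = (Σ_{b∈H} K(a,b))/(Σ_{b∈H} K(ι,b)). Then for every a ∈ H, |λ_a(L) − λ_a(L')| ≤ 2Δ(L) + Δ(L'). Moreover, λ_a(L), λ_a(L'), and L'(a,b)/L'(ι,b) (for every b) all lie in the interval [min_{e∈H} L(a,e)/L(ι,e), max_{e∈H} L(a,e)/L(ι,e)]. -/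
/-- `lamRatio ι K a = (∑_b K a b) / (∑_b K ι b)`. -/
noncomputable def lamRatio {H : Type*} [Fintype H] (ι : H) (K : H → H → ℝ) (a : H) : ℝ :=
  (∑ b, K a b) / (∑ b, K ι b)

lemma Delta_nonneg {H : Type*} [Fintype H] [Nonempty H] (K : H → H → ℝ) : 0 ≤ Delta K := by
  classical
  obtain ⟨x⟩ := (inferInstance : Nonempty H)
  have := Finset.le_sup' (f := fun x : (H × H) × H × H =>
    |K x.1.2 x.2.1 / K x.1.1 x.2.1 - K x.1.2 x.2.2 / K x.1.1 x.2.2|)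
    (b := ((x, x), x, x)) (Finset.mem_univ _)
  simpa [Delta] using this.trans_eq' (by simp)

lemma Delta_ge {H : Type*} [Fintype H] [Nonempty H] (K : H → H → ℝ) (a b c d : H) :
    |K b c / K a c - K b d / K a d| ≤ Delta K := by
  exact Finset.le_sup' (f := fun x : (H × H) × H × H =>
    |K x.1.2 x.2.1 / K x.1.1 x.2.1 - K x.1.2 x.2.2 / K x.1.1 x.2.2|)
    (b := ((a, b), c, d)) (Finset.mem_univ _)

lemma ratio_mem {H : Type*} [Fintype H] [Nonempty H] (u v w : H → ℝ)
    (hv : ∀ e, 0 < v e) (hw : ∀ e, 0 < w e) :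
    (∑ e, u e * w e) / (∑ e, v e * w e) ∈ Set.Icc
      (Finset.univ.inf' Finset.univ_nonempty fun e => u e / v e)
      (Finset.univ.sup' Finset.univ_nonempty fun e => u e / v e) := by
  have hden : 0 < ∑ e, v e * w e :=
    Finset.sum_pos (fun e _ => mul_pos (hv e) (hw e)) Finset.univ_nonempty
  constructor
  · rw [le_div_iff₀ hden, Finset.mul_sum]
    refine Finset.sum_le_sum fun e _ => ?_
    have h1 : (Finset.univ.inf' Finset.univ_nonempty fun e => u e / v e) ≤ u e / v e :=
      Finset.inf'_le (fun e => u e / v e) (Finset.mem_univ e)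
    have h2 : (Finset.univ.inf' Finset.univ_nonempty fun e => u e / v e) * v e ≤ u e := by
      rw [← le_div_iff₀ (hv e)]; exact h1
    calc (Finset.univ.inf' Finset.univ_nonempty fun e => u e / v e) * (v e * w e)
        = ((Finset.univ.inf' Finset.univ_nonempty fun e => u e / v e) * v e) * w e := by ring
      _ ≤ u e * w e := mul_le_mul_of_nonneg_right h2 (hw e).le
  · rw [div_le_iff₀ hden, Finset.mul_sum]
    refine Finset.sum_le_sum fun e _ => ?_
    have h1 : u e / v e ≤ Finset.univ.sup' Finset.univ_nonempty fun e => u e / v e :=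
      Finset.le_sup' (fun e => u e / v e) (Finset.mem_univ e)
    have h2 : u e ≤ (Finset.univ.sup' Finset.univ_nonempty fun e => u e / v e) * v e := by
      rw [← div_le_iff₀ (hv e)]; exact h1
    calc u e * w e ≤ ((Finset.univ.sup' Finset.univ_nonempty fun e => u e / v e) * v e) * w e :=
        mul_le_mul_of_nonneg_right h2 (hw e).le
      _ = (Finset.univ.sup' Finset.univ_nonempty fun e => u e / v e) * (v e * w e) := by ring

theorem stmt8 {H : Type*} [Fintype H] [Nonempty H] (ι : H)
    (L M : H → H → ℝ) (hL : ∀ a b, 0 < L a b) (hM : ∀ a b, 0 < M a b)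
    (ψ : H → ℝ) (hψ : ∀ b, 0 < ψ b) :
    ∀ a : H,
      |lamRatio ι L a - lamRatio ι (fun a' b => ψ b * ∑ e, L a' e * M e b) a| ≤
          2 * Delta L + Delta (fun a' b => ψ b * ∑ e, L a' e * M e b) ∧
        lamRatio ι L a ∈ Set.Icc
          (Finset.univ.inf' Finset.univ_nonempty fun e => L a e / L ι e)
          (Finset.univ.sup' Finset.univ_nonempty fun e => L a e / L ι e) ∧
        lamRatio ι (fun a' b => ψ b * ∑ e, L a' e * M e b) a ∈ Set.Icc
          (Finset.univ.inf' Finset.univ_nonempty fun e => L a e / L ι e)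
          (Finset.univ.sup' Finset.univ_nonempty fun e => L a e / L ι e) ∧
        ∀ b : H,
          (ψ b * ∑ e, L a e * M e b) / (ψ b * ∑ e, L ι e * M e b) ∈ Set.Icc
            (Finset.univ.inf' Finset.univ_nonempty fun e => L a e / L ι e)
            (Finset.univ.sup' Finset.univ_nonempty fun e => L a e / L ι e) := by
  intro a
  set i := Finset.univ.inf' Finset.univ_nonempty fun e => L a e / L ι e with hi
  set s := Finset.univ.sup' Finset.univ_nonempty fun e => L a e / L ι e with hs
  -- membership for lamRatio L
  have mem1 : lamRatio ι L a ∈ Set.Icc i s := by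
    have := ratio_mem (L a) (L ι) (fun _ => 1) (hL ι) (fun _ => one_pos)
    simpa [lamRatio, hi, hs] using this
  -- swapping sums
  have key : ∀ a', (∑ b, ψ b * ∑ e, L a' e * M e b)
      = ∑ e, L a' e * (∑ b, ψ b * M e b) := by
    intro a'
    simp_rw [Finset.mul_sum]
    rw [Finset.sum_comm]
    exact Finset.sum_congr rfl fun e _ => Finset.sum_congr rfl fun b _ => by ring
  have mem2 : lamRatio ι (fun a' b => ψ b * ∑ e, L a' e * M e b) a ∈ Set.Icc i s := by
    have hw : ∀ e, 0 < ∑ b, ψ b * M e b := fun e =>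
      Finset.sum_pos (fun b _ => mul_pos (hψ b) (hM e b)) Finset.univ_nonempty
    have := ratio_mem (L a) (L ι) (fun e => ∑ b, ψ b * M e b) (hL ι) hw
    simpa [lamRatio, key, hi, hs] using this
  refine ⟨?_, mem1, mem2, ?_⟩
  · -- main inequality
    have hsub : s - i ≤ Delta L := by
      obtain ⟨c, _, hc⟩ := Finset.exists_mem_eq_sup' (Finset.univ_nonempty (α := H))
        (fun e => L a e / L ι e)
      obtain ⟨d, _, hd⟩ := Finset.exists_mem_eq_inf' (Finset.univ_nonempty (α := H))
        (fun e => L a e / L ι e)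
      have := Delta_ge L ι a c d
      calc s - i = L a c / L ι c - L a d / L ι d := by rw [hs, hi, hc, hd]
        _ ≤ |L a c / L ι c - L a d / L ι d| := le_abs_self _
        _ ≤ Delta L := this
    have habs : |lamRatio ι L a - lamRatio ι (fun a' b => ψ b * ∑ e, L a' e * M e b) a|
        ≤ s - i := by
      rw [abs_sub_le_iff]
      exact ⟨sub_le_sub mem1.2 mem2.1, sub_le_sub mem2.2 mem1.1⟩
    have h0 : 0 ≤ Delta L := Delta_nonneg L
    have h0' : 0 ≤ Delta (fun a' b => ψ b * ∑ e, L a' e * M e b) := Delta_nonneg _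
    linarith
  · intro b
    have hψb := (hψ b).ne'
    rw [mul_div_mul_left _ _ hψb]
    exact ratio_mem (L a) (L ι) (fun e => M e b) (hL ι) (fun e => hM e b)
end

section
/- Let σ = (σ_0,…,σ_n) be a binary Markov chain as in the context, and for t = 1,…,n let ℓ_t : ℝ × {0,1} → ℝ be such that ε ↦ ℓ_t(ε,a) is differentiable for a = 0,1, with ℓ_t(0,1) = ℓ_t(0,0). Define d_t(ε) = ℓ_t(ε,1) − ℓ_t(ε,0), S_n(ε) = Σ_{t=1}^n ℓ_t(ε,σ_t), and λ_n(ε) = ln E[e^{S_n(ε)} | σ_0 = 1] − ln E[e^{S_n(ε)} | σ_0 = 0]. Then λ_n is differentiable at 0 and λ_n'(0) = Σ_{t=1}^n D_{0t} · d_t'(0). -/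
/-- The weight `π(v₀) ∏_{t=1}^n Q_t(v_{t−1}, v_t)` of a path `v` of a (possibly
time-inhomogeneous) binary Markov chain `σ₀, …, σ_n` with initial law `π` and one-step
transition matrices `Q_t`. -/
noncomputable def pathWeight (n : ℕ) (π : Fin 2 → ℝ) (Q : ℕ → Fin 2 → Fin 2 → ℝ)
    (v : Fin (n + 1) → Fin 2) : ℝ :=
  π (v 0) * ∏ t : Fin n, Q (t.1 + 1) (v t.castSucc) (v t.succ)

/-- The conditional expectation `E[F(σ) | σ_s = a]`, a finite weighted sum over paths
with `σ_s = a`. -/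
noncomputable def condExp' (n : ℕ) (π : Fin 2 → ℝ) (Q : ℕ → Fin 2 → Fin 2 → ℝ)
    (s : Fin (n + 1)) (a : Fin 2) (F : (Fin (n + 1) → Fin 2) → ℝ) : ℝ :=
  (∑ v : Fin (n + 1) → Fin 2, if v s = a then pathWeight n π Q v * F v else 0) /
    (∑ v : Fin (n + 1) → Fin 2, if v s = a then pathWeight n π Q v else 0)

/-- The conditional probability `P_{st}(a,b) = P(σ_t = b | σ_s = a)`. -/
noncomputable def condProb (n : ℕ) (π : Fin 2 → ℝ) (Q : ℕ → Fin 2 → Fin 2 → ℝ)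
    (s t : Fin (n + 1)) (a b : Fin 2) : ℝ :=
  condExp' n π Q s a fun v => if v t = b then 1 else 0

/-! ### Auxiliary definitions -/

/-- Total weight of paths starting at `a`. -/
noncomputable def Zaux (n : ℕ) (π : Fin 2 → ℝ) (Q : ℕ → Fin 2 → Fin 2 → ℝ) (a : Fin 2) : ℝ :=
  ∑ v : Fin (n + 1) → Fin 2, if v 0 = a then pathWeight n π Q v else 0

/-- Numerator of the conditional moment generating function. -/
noncomputable def Naux (n : ℕ) (π : Fin 2 → ℝ) (Q : ℕ → Fin 2 → Fin 2 → ℝ)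
    (ℓ : ℕ → ℝ → Fin 2 → ℝ) (a : Fin 2) (ε : ℝ) : ℝ :=
  ∑ v : Fin (n + 1) → Fin 2, if v 0 = a then
    pathWeight n π Q v * Real.exp (∑ t : Fin n, ℓ (t.1 + 1) ε (v t.succ)) else 0

/-- Numerator of the conditional probability `P(σ_{t+1} = 1 | σ₀ = a)`. -/
noncomputable def Maux (n : ℕ) (π : Fin 2 → ℝ) (Q : ℕ → Fin 2 → Fin 2 → ℝ)
    (a : Fin 2) (t : Fin n) : ℝ :=
  ∑ v : Fin (n + 1) → Fin 2, if v 0 = a then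
    pathWeight n π Q v * (if v t.succ = 1 then (1 : ℝ) else 0) else 0

/-- Derivative at `0` of `Naux`. -/
noncomputable def Ndaux (n : ℕ) (π : Fin 2 → ℝ) (Q : ℕ → Fin 2 → Fin 2 → ℝ)
    (ℓ : ℕ → ℝ → Fin 2 → ℝ) (a : Fin 2) : ℝ :=
  ∑ v : Fin (n + 1) → Fin 2, if v 0 = a then
    pathWeight n π Q v * Real.exp (∑ t : Fin n, ℓ (t.1 + 1) 0 (v t.succ)) *
      (∑ t : Fin n, deriv (fun ε => ℓ (t.1 + 1) ε (v t.succ)) 0) else 0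

lemma ite_const_mul {ι : Type*} (s : Finset ι) (P : ι → Prop) [DecidablePred P]
    (c : ℝ) (f : ι → ℝ) :
    (∑ v ∈ s, if P v then c * f v else 0) = c * ∑ v ∈ s, if P v then f v else 0 := by
  rw [Finset.mul_sum]
  exact Finset.sum_congr rfl fun v _ => by by_cases h : P v <;> simp [h]

lemma pathWeight_pos (n : ℕ) (π : Fin 2 → ℝ) (Q : ℕ → Fin 2 → Fin 2 → ℝ)
    (hπ : ∀ a, 0 < π a) (hQpos : ∀ t a b, 0 < Q t a b) (v : Fin (n + 1) → Fin 2) :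
    0 < pathWeight n π Q v :=
  mul_pos (hπ _) (Finset.prod_pos fun _ _ => hQpos _ _ _)

lemma Zaux_pos (n : ℕ) (π : Fin 2 → ℝ) (Q : ℕ → Fin 2 → Fin 2 → ℝ)
    (hπ : ∀ a, 0 < π a) (hQpos : ∀ t a b, 0 < Q t a b) (a : Fin 2) :
    0 < Zaux n π Q a := by
  refine Finset.sum_pos' (fun v _ => ?_) ⟨fun _ => a, Finset.mem_univ _, ?_⟩
  · split
    · exact (pathWeight_pos n π Q hπ hQpos v).le
    · exact le_rfl
  · simpa using pathWeight_pos n π Q hπ hQpos (fun _ => a)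

lemma Naux_pos (n : ℕ) (π : Fin 2 → ℝ) (Q : ℕ → Fin 2 → Fin 2 → ℝ)
    (ℓ : ℕ → ℝ → Fin 2 → ℝ) (hπ : ∀ a, 0 < π a) (hQpos : ∀ t a b, 0 < Q t a b)
    (a : Fin 2) (ε : ℝ) : 0 < Naux n π Q ℓ a ε := by
  refine Finset.sum_pos' (fun v _ => ?_) ⟨fun _ => a, Finset.mem_univ _, ?_⟩
  · split
    · exact (mul_pos (pathWeight_pos n π Q hπ hQpos v) (Real.exp_pos _)).le
    · exact le_rfl
  · simpa using mul_pos (pathWeight_pos n π Q hπ hQpos (fun _ => a)) (Real.exp_pos _)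

lemma mem_Icc_aux (n : ℕ) (t : Fin n) : t.1 + 1 ∈ Finset.Icc 1 n :=
  Finset.mem_Icc.2 ⟨Nat.le_add_left 1 t.1, t.2⟩

lemma Naux_hasDerivAt (n : ℕ) (π : Fin 2 → ℝ) (Q : ℕ → Fin 2 → Fin 2 → ℝ)
    (ℓ : ℕ → ℝ → Fin 2 → ℝ)
    (hdiff : ∀ t ∈ Finset.Icc 1 n, ∀ a, Differentiable ℝ fun ε => ℓ t ε a) (a : Fin 2) :
    HasDerivAt (Naux n π Q ℓ a) (Ndaux n π Q ℓ a) 0 := by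
  apply HasDerivAt.fun_sum
  intro v _
  by_cases h : v 0 = a
  · simp only [h, if_true]
    have hS : HasDerivAt (fun ε => ∑ t : Fin n, ℓ (t.1 + 1) ε (v t.succ))
        (∑ t : Fin n, deriv (fun ε => ℓ (t.1 + 1) ε (v t.succ)) 0) 0 := by
      apply HasDerivAt.fun_sum
      intro t _
      exact ((hdiff _ (mem_Icc_aux n t) (v t.succ)) 0).hasDerivAt
    simpa [mul_assoc] using (hS.exp.const_mul (pathWeight n π Q v))
  · simp only [h, if_false]
    exact hasDerivAt_const _ _

lemma Naux_zero (n : ℕ) (π : Fin 2 → ℝ) (Q : ℕ → Fin 2 → Fin 2 → ℝ)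
    (ℓ : ℕ → ℝ → Fin 2 → ℝ) (h0 : ∀ t ∈ Finset.Icc 1 n, ℓ t 0 1 = ℓ t 0 0) (a : Fin 2) :
    Naux n π Q ℓ a 0 = Real.exp (∑ t : Fin n, ℓ (t.1 + 1) 0 0) * Zaux n π Q a := by
  have hℓ : ∀ (t : Fin n) (b : Fin 2), ℓ (t.1 + 1) 0 b = ℓ (t.1 + 1) 0 0 := by
    intro t b
    fin_cases b
    · rfl
    · exact h0 _ (mem_Icc_aux n t)
  unfold Naux Zaux
  rw [Finset.mul_sum]
  refine Finset.sum_congr rfl fun v _ => ?_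
  by_cases h : v 0 = a
  · simp only [h, if_true]
    rw [show (∑ t : Fin n, ℓ (t.1 + 1) 0 (v t.succ)) = ∑ t : Fin n, ℓ (t.1 + 1) 0 0 from
      Finset.sum_congr rfl fun t _ => hℓ t _]
    ring
  · simp [h]

lemma Ndaux_eq (n : ℕ) (π : Fin 2 → ℝ) (Q : ℕ → Fin 2 → Fin 2 → ℝ)
    (ℓ : ℕ → ℝ → Fin 2 → ℝ) (h0 : ∀ t ∈ Finset.Icc 1 n, ℓ t 0 1 = ℓ t 0 0) (a : Fin 2) :
    Ndaux n π Q ℓ a = Real.exp (∑ t : Fin n, ℓ (t.1 + 1) 0 0) *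
      ∑ t : Fin n, (deriv (fun ε => ℓ (t.1 + 1) ε 0) 0 * Zaux n π Q a +
        (deriv (fun ε => ℓ (t.1 + 1) ε 1) 0 - deriv (fun ε => ℓ (t.1 + 1) ε 0) 0) *
          Maux n π Q a t) := by
  have hℓ : ∀ (t : Fin n) (b : Fin 2), ℓ (t.1 + 1) 0 b = ℓ (t.1 + 1) 0 0 := by
    intro t b
    fin_cases b
    · rfl
    · exact h0 _ (mem_Icc_aux n t)
  have hg : ∀ (t : Fin n) (b : Fin 2),
      deriv (fun ε => ℓ (t.1 + 1) ε b) 0 =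
        deriv (fun ε => ℓ (t.1 + 1) ε 0) 0 +
          (deriv (fun ε => ℓ (t.1 + 1) ε 1) 0 - deriv (fun ε => ℓ (t.1 + 1) ε 0) 0) *
            (if b = 1 then (1 : ℝ) else 0) := by
    intro t b
    fin_cases b <;> simp
  set C : ℝ := Real.exp (∑ t : Fin n, ℓ (t.1 + 1) 0 0) with hC
  unfold Ndaux
  calc (∑ v : Fin (n + 1) → Fin 2, if v 0 = a then
          pathWeight n π Q v * Real.exp (∑ t : Fin n, ℓ (t.1 + 1) 0 (v t.succ)) *
            (∑ t : Fin n, deriv (fun ε => ℓ (t.1 + 1) ε (v t.succ)) 0) else 0)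
      = ∑ v : Fin (n + 1) → Fin 2, ∑ t : Fin n, (if v 0 = a then
          C * (deriv (fun ε => ℓ (t.1 + 1) ε 0) 0 * pathWeight n π Q v +
            (deriv (fun ε => ℓ (t.1 + 1) ε 1) 0 - deriv (fun ε => ℓ (t.1 + 1) ε 0) 0) *
              (pathWeight n π Q v * (if v t.succ = 1 then (1 : ℝ) else 0))) else 0) := by
        refine Finset.sum_congr rfl fun v _ => ?_
        by_cases h : v 0 = a
        · simp only [h, if_true]
          rw [show (∑ t : Fin n, ℓ (t.1 + 1) 0 (v t.succ)) = ∑ t : Fin n, ℓ (t.1 + 1) 0 0 from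
            Finset.sum_congr rfl fun t _ => hℓ t _, ← hC, Finset.mul_sum]
          refine Finset.sum_congr rfl fun t _ => ?_
          rw [hg t (v t.succ)]
          ring
        · simp [h]
      _ = ∑ t : Fin n, ∑ v : Fin (n + 1) → Fin 2, (if v 0 = a then
          C * (deriv (fun ε => ℓ (t.1 + 1) ε 0) 0 * pathWeight n π Q v +
            (deriv (fun ε => ℓ (t.1 + 1) ε 1) 0 - deriv (fun ε => ℓ (t.1 + 1) ε 0) 0) *
              (pathWeight n π Q v * (if v t.succ = 1 then (1 : ℝ) else 0))) else 0) :=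
        Finset.sum_comm
      _ = C * ∑ t : Fin n, (deriv (fun ε => ℓ (t.1 + 1) ε 0) 0 * Zaux n π Q a +
            (deriv (fun ε => ℓ (t.1 + 1) ε 1) 0 - deriv (fun ε => ℓ (t.1 + 1) ε 0) 0) *
              Maux n π Q a t) := by
        rw [Finset.mul_sum]
        refine Finset.sum_congr rfl fun t _ => ?_
        unfold Zaux Maux
        calc (∑ v : Fin (n + 1) → Fin 2, if v 0 = a then
                C * (deriv (fun ε => ℓ (t.1 + 1) ε 0) 0 * pathWeight n π Q v +
                  (deriv (fun ε => ℓ (t.1 + 1) ε 1) 0 - deriv (fun ε => ℓ (t.1 + 1) ε 0) 0) *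
                    (pathWeight n π Q v * (if v t.succ = 1 then (1 : ℝ) else 0))) else 0)
            = ∑ v : Fin (n + 1) → Fin 2,
                ((if v 0 = a then (C * deriv (fun ε => ℓ (t.1 + 1) ε 0) 0) *
                    pathWeight n π Q v else 0) +
                 (if v 0 = a then (C * (deriv (fun ε => ℓ (t.1 + 1) ε 1) 0 -
                    deriv (fun ε => ℓ (t.1 + 1) ε 0) 0)) *
                    (pathWeight n π Q v * (if v t.succ = 1 then (1 : ℝ) else 0)) else 0)) := by
              refine Finset.sum_congr rfl fun v _ => ?_
              by_cases h : v 0 = a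
              · simp only [h, if_true]; ring
              · simp [h]
          _ = (∑ v : Fin (n + 1) → Fin 2, if v 0 = a then
                  (C * deriv (fun ε => ℓ (t.1 + 1) ε 0) 0) * pathWeight n π Q v else 0) +
              (∑ v : Fin (n + 1) → Fin 2, if v 0 = a then
                  (C * (deriv (fun ε => ℓ (t.1 + 1) ε 1) 0 -
                    deriv (fun ε => ℓ (t.1 + 1) ε 0) 0)) *
                    (pathWeight n π Q v * (if v t.succ = 1 then (1 : ℝ) else 0)) else 0) :=
              Finset.sum_add_distrib
          _ = C * (deriv (fun ε => ℓ (t.1 + 1) ε 0) 0 *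
                (∑ v : Fin (n + 1) → Fin 2, if v 0 = a then pathWeight n π Q v else 0) +
              (deriv (fun ε => ℓ (t.1 + 1) ε 1) 0 - deriv (fun ε => ℓ (t.1 + 1) ε 0) 0) *
                (∑ v : Fin (n + 1) → Fin 2, if v 0 = a then
                  pathWeight n π Q v * (if v t.succ = 1 then (1 : ℝ) else 0) else 0)) := by
              rw [ite_const_mul, ite_const_mul]
              ring

/-- Let `σ = (σ₀,…,σ_n)` be a binary Markov chain with everywhere
positive initial law `π` and strictly positive row-stochastic transition matrices
`Q_t`, and for `t = 1,…,n` let `ℓ t (ε, a)` be differentiable in `ε` with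
`ℓ t (0,1) = ℓ t (0,0)`.  With `d_t(ε) = ℓ_t(ε,1) − ℓ_t(ε,0)`,
`S_n(ε) = ∑_{t=1}^n ℓ_t(ε, σ_t)` and
`λ_n(ε) = ln E[e^{S_n(ε)} | σ₀ = 1] − ln E[e^{S_n(ε)} | σ₀ = 0]`, the function `λ_n`
is differentiable at `0` with `λ_n'(0) = ∑_{t=1}^n D_{0t} d_t'(0)`. -/
theorem stmt10 (n : ℕ) (π : Fin 2 → ℝ) (Q : ℕ → Fin 2 → Fin 2 → ℝ)
    (hπ : ∀ a, 0 < π a) (hπsum : π 0 + π 1 = 1)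
    (hQpos : ∀ t a b, 0 < Q t a b) (hQrow : ∀ t a, Q t a 0 + Q t a 1 = 1)
    (ℓ : ℕ → ℝ → Fin 2 → ℝ)
    (hdiff : ∀ t ∈ Finset.Icc 1 n, ∀ a, Differentiable ℝ fun ε => ℓ t ε a)
    (h0 : ∀ t ∈ Finset.Icc 1 n, ℓ t 0 1 = ℓ t 0 0) :
    HasDerivAt (fun ε =>
        Real.log (condExp' n π Q 0 1 fun v =>
          Real.exp (∑ t : Fin n, ℓ (t.1 + 1) ε (v t.succ))) -
        Real.log (condExp' n π Q 0 0 fun v =>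
          Real.exp (∑ t : Fin n, ℓ (t.1 + 1) ε (v t.succ))))
      (∑ t : Fin n,
        (condProb n π Q 0 t.succ 1 1 - condProb n π Q 0 t.succ 0 1) *
          deriv (fun ε => ℓ (t.1 + 1) ε 1 - ℓ (t.1 + 1) ε 0) 0) 0 := by
  have hZ : ∀ a, 0 < Zaux n π Q a := Zaux_pos n π Q hπ hQpos
  have hN : ∀ a ε, 0 < Naux n π Q ℓ a ε := Naux_pos n π Q ℓ hπ hQpos
  have hCpos : (0 : ℝ) < Real.exp (∑ t : Fin n, ℓ (t.1 + 1) 0 0) := Real.exp_pos _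
  -- rewrite the function
  have hfun : (fun ε =>
        Real.log (condExp' n π Q 0 1 fun v =>
          Real.exp (∑ t : Fin n, ℓ (t.1 + 1) ε (v t.succ))) -
        Real.log (condExp' n π Q 0 0 fun v =>
          Real.exp (∑ t : Fin n, ℓ (t.1 + 1) ε (v t.succ)))) =
      fun ε => (Real.log (Naux n π Q ℓ 1 ε) - Real.log (Naux n π Q ℓ 0 ε)) -
        (Real.log (Zaux n π Q 1) - Real.log (Zaux n π Q 0)) := by
    funext ε
    have e1 : (condExp' n π Q 0 1 fun v =>
        Real.exp (∑ t : Fin n, ℓ (t.1 + 1) ε (v t.succ))) =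
        Naux n π Q ℓ 1 ε / Zaux n π Q 1 := rfl
    have e0 : (condExp' n π Q 0 0 fun v =>
        Real.exp (∑ t : Fin n, ℓ (t.1 + 1) ε (v t.succ))) =
        Naux n π Q ℓ 0 ε / Zaux n π Q 0 := rfl
    rw [e1, e0, Real.log_div (hN 1 ε).ne' (hZ 1).ne', Real.log_div (hN 0 ε).ne' (hZ 0).ne']
    ring
  rw [hfun]
  have H : HasDerivAt (fun ε => Real.log (Naux n π Q ℓ 1 ε) - Real.log (Naux n π Q ℓ 0 ε))
      (Ndaux n π Q ℓ 1 / Naux n π Q ℓ 1 0 - Ndaux n π Q ℓ 0 / Naux n π Q ℓ 0 0) 0 :=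
    ((Naux_hasDerivAt n π Q ℓ hdiff 1).log (hN 1 0).ne').sub
      ((Naux_hasDerivAt n π Q ℓ hdiff 0).log (hN 0 0).ne')
  have H2 : HasDerivAt (fun ε => Real.log (Naux n π Q ℓ 1 ε) - Real.log (Naux n π Q ℓ 0 ε) -
      (Real.log (Zaux n π Q 1) - Real.log (Zaux n π Q 0)))
      (Ndaux n π Q ℓ 1 / Naux n π Q ℓ 1 0 - Ndaux n π Q ℓ 0 / Naux n π Q ℓ 0 0) 0 :=
    H.sub_const (Real.log (Zaux n π Q 1) - Real.log (Zaux n π Q 0))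
  convert H2 using 1
  -- value equality
  have hP : ∀ (a : Fin 2) (t : Fin n),
      condProb n π Q 0 t.succ a 1 = Maux n π Q a t / Zaux n π Q a := fun a t => rfl
  have hd : ∀ t : Fin n, deriv (fun ε => ℓ (t.1 + 1) ε 1 - ℓ (t.1 + 1) ε 0) 0 =
      deriv (fun ε => ℓ (t.1 + 1) ε 1) 0 - deriv (fun ε => ℓ (t.1 + 1) ε 0) 0 := by
    intro t
    exact deriv_fun_sub ((hdiff _ (mem_Icc_aux n t) 1) 0) ((hdiff _ (mem_Icc_aux n t) 0) 0)
  simp only [hd]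
  simp only [hP]
  rw [Naux_zero n π Q ℓ h0 1, Naux_zero n π Q ℓ h0 0, Ndaux_eq n π Q ℓ h0 1,
    Ndaux_eq n π Q ℓ h0 0, mul_div_mul_left _ _ hCpos.ne', mul_div_mul_left _ _ hCpos.ne',
    Finset.sum_div, Finset.sum_div, ← Finset.sum_sub_distrib]
  refine Finset.sum_congr rfl fun t _ => ?_
  field_simp [(hZ 1).ne', (hZ 0).ne']
  ring
end
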